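/- arXiv:2206.14303 — 7 statements merged into one kernel-verified Lean document; each statement's English description precedes it below -/
import Mathlib

section
/- Suppose every column of X satisfies ‖X_j‖₂² = n, and let σ̃₀² > 0. If S_r ⊆ S_s, then D_r / D_s ≤ (1 + n σ̃₀²)^{|S_s \ S_r| / 2}. -/
open Matrix

noncomputable section

/-- The `n × |S|` submatrix of `X` consisting of the columns indexed by `S`. -/
def subcols {n p : ℕ} (X : Matrix (Fin n) (Fin p) ℝ) (S : Finset (Fin p)) :
    Matrix (Fin n) {j // j ∈ S} ℝ :=
  Matrix.of fun i j => X i j.1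

/-- `Φ_S = X_S (X_Sᵀ X_S)⁻¹ X_Sᵀ`, the orthogonal projection onto the column span of `X_S`
(when `X_S` has full column rank). -/
def proj {n p : ℕ} (X : Matrix (Fin n) (Fin p) ℝ) (S : Finset (Fin p)) :
    Matrix (Fin n) (Fin n) ℝ :=
  subcols X S * ((subcols X S)ᵀ * subcols X S)⁻¹ * (subcols X S)ᵀ

/-- `D_S = det(I + σ̃₀² X_Sᵀ X_S)^{-1/2}` (here `t = σ̃₀²`). -/
def Dmat {n p : ℕ} (X : Matrix (Fin n) (Fin p) ℝ) (t : ℝ) (S : Finset (Fin p)) : ℝ :=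
  ((1 : Matrix {j // j ∈ S} {j // j ∈ S} ℝ) + t • ((subcols X S)ᵀ * subcols X S)).det
    ^ (-(1 : ℝ) / 2)

def Amat {n p : ℕ} (X : Matrix (Fin n) (Fin p) ℝ) (t : ℝ) (S : Finset (Fin p)) :
    Matrix {j // j ∈ S} {j // j ∈ S} ℝ :=
  1 + t • ((subcols X S)ᵀ * subcols X S)

lemma gram_psd {n p : ℕ} (X : Matrix (Fin n) (Fin p) ℝ) (S : Finset (Fin p)) :
    ((subcols X S)ᵀ * subcols X S).PosSemidef := by
  simpa using Matrix.posSemidef_conjTranspose_mul_self (subcols X S)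

lemma Amat_posDef {n p : ℕ} (X : Matrix (Fin n) (Fin p) ℝ) {t : ℝ} (ht : 0 < t)
    (S : Finset (Fin p)) : (Amat X t S).PosDef := by
  refine Matrix.PosDef.add_posSemidef Matrix.PosDef.one ?_
  have h := gram_psd X S
  refine Matrix.PosSemidef.of_dotProduct_mulVec_nonneg ?_ fun x => ?_
  · simpa [Matrix.IsHermitian, Matrix.conjTranspose_smul] using congrArg (t • ·) h.1.eq
  · rw [Matrix.smul_mulVec, dotProduct_smul]
    exact mul_nonneg ht.le (h.dotProduct_mulVec_nonneg x)

lemma det_insert_le {n p : ℕ} (X : Matrix (Fin n) (Fin p) ℝ) {t : ℝ} (ht : 0 < t)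
    (hcols : ∀ j : Fin p, (fun i => X i j) ⬝ᵥ (fun i => X i j) = (n : ℝ))
    {a : Fin p} {S : Finset (Fin p)} (ha : a ∉ S) :
    (Amat X t (insert a S)).det ≤ (Amat X t S).det * (1 + (n : ℝ) * t) := by
  classical
  set A := Amat X t S with hA_def
  have hA : A.PosDef := Amat_posDef X ht S
  set c : {j // j ∈ S} → ℝ := fun j => t * ∑ i, X i j.1 * X i a with hc
  set B : Matrix {j // j ∈ S} Unit ℝ := fun j _ => c j with hB
  set C : Matrix Unit {j // j ∈ S} ℝ := fun _ j => c j with hC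
  set D : Matrix Unit Unit ℝ := fun _ _ => 1 + (n : ℝ) * t with hD
  -- the reindexing equivalence
  let e : ({j // j ∈ S} ⊕ Unit) ≃ {j // j ∈ insert a S} :=
    { toFun := Sum.elim (fun j => ⟨j.1, Finset.mem_insert_of_mem j.2⟩)
        (fun _ => ⟨a, Finset.mem_insert_self a S⟩)
      invFun := fun x => if h : x.1 ∈ S then Sum.inl ⟨x.1, h⟩ else Sum.inr ()
      left_inv := by
        rintro (⟨j, hj⟩ | ⟨⟩)
        · simp [hj]
        · simp [ha]
      right_inv := by
        rintro ⟨x, hx⟩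
        rcases Finset.mem_insert.mp hx with h | h
        · subst h; simp [ha]
        · simp [h] }
  have hsub : (Amat X t (insert a S)).submatrix e e = fromBlocks A B C D := by
    ext i j
    have hgram : ∀ (T : Finset (Fin p)) (u v : {j // j ∈ T}),
        ((subcols X T)ᵀ * subcols X T) u v = ∑ i, X i u.1 * X i v.1 := by
      intro T u v
      simp [Matrix.mul_apply, subcols]
    cases i with
    | inl u =>
      cases j with
      | inl v =>
        have h1 : ((⟨u.1, Finset.mem_insert_of_mem u.2⟩ : {j // j ∈ insert a S}) =
            ⟨v.1, Finset.mem_insert_of_mem v.2⟩) ↔ u = v := by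
          exact ⟨fun h => Subtype.ext (Subtype.mk.inj h), fun h => h ▸ rfl⟩
        simp only [Matrix.submatrix_apply, Amat, Matrix.add_apply, Matrix.smul_apply,
          fromBlocks_apply₁₁, Matrix.one_apply, hgram]
        simp [e, hA_def, Amat, Matrix.add_apply, Matrix.one_apply, hgram, h1, smul_eq_mul]
      | inr v =>
        have hne : u.1 ≠ a := fun h => ha (h ▸ u.2)
        simp only [Matrix.submatrix_apply, Amat, Matrix.add_apply, Matrix.smul_apply,
          fromBlocks_apply₁₂, Matrix.one_apply, hgram]
        simp [e, hB, hc, Subtype.ext_iff, hne, smul_eq_mul]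
    | inr u =>
      cases j with
      | inl v =>
        have hne : a ≠ v.1 := fun h => ha (h ▸ v.2)
        simp only [Matrix.submatrix_apply, Amat, Matrix.add_apply, Matrix.smul_apply,
          fromBlocks_apply₂₁, Matrix.one_apply, hgram]
        simp [e, hC, hc, Subtype.ext_iff, hne, smul_eq_mul, mul_comm]
      | inr v =>
        simp only [Matrix.submatrix_apply, Amat, Matrix.add_apply, Matrix.smul_apply,
          fromBlocks_apply₂₂, Matrix.one_apply, hgram]
        have := hcols a
        simp only [dotProduct] at this
        simp [e, hD, this, smul_eq_mul, mul_comm]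
  haveI : Invertible A := A.invertibleOfIsUnitDet hA.det_pos.ne'.isUnit
  have hdet : (Amat X t (insert a S)).det = A.det * (D - C * ⅟A * B) () () := by
    rw [← Matrix.det_submatrix_equiv_self e, hsub, Matrix.det_fromBlocks₁₁]
    congr 1
    exact Matrix.det_unique _
  rw [hdet]
  have hq : 0 ≤ (C * ⅟A * B) () () := by
    have hinv : A⁻¹.PosSemidef := hA.inv.posSemidef
    have h0 := hinv.dotProduct_mulVec_nonneg c
    have hform : (C * ⅟A * B) () () = star c ⬝ᵥ (A⁻¹ *ᵥ c) := by
      rw [Matrix.invOf_eq_nonsing_inv]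
      simp only [Matrix.mul_apply, Matrix.mulVec, dotProduct, hB, hC, star_trivial,
        Finset.sum_mul, Finset.mul_sum]
      rw [Finset.sum_comm]
      change (C * A⁻¹ * B) () () = _
      simp only [Matrix.mul_apply, Finset.sum_mul]
      simp only [hB, hC]
      exact Finset.sum_congr rfl fun j _ => Finset.sum_congr rfl fun k _ => by ring
    rw [hform]; exact h0
  have : (D - C * ⅟A * B) () () ≤ 1 + (n : ℝ) * t := by
    simp only [Matrix.sub_apply, hD]
    exact sub_le_self _ hq
  calc A.det * (D - C * ⅟A * B) () () ≤ A.det * (1 + (n:ℝ)*t) :=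
        mul_le_mul_of_nonneg_left this hA.det_pos.le

lemma det_union_le {n p : ℕ} (X : Matrix (Fin n) (Fin p) ℝ) {t : ℝ} (ht : 0 < t)
    (hcols : ∀ j : Fin p, (fun i => X i j) ⬝ᵥ (fun i => X i j) = (n : ℝ))
    (r : Finset (Fin p)) (u : Finset (Fin p)) :
    (Amat X t (r ∪ u)).det ≤ (Amat X t r).det * (1 + (n : ℝ) * t) ^ u.card := by
  classical
  induction u using Finset.induction_on with
  | empty => rw [Finset.union_empty]; simp
  | @insert a u ha ih =>
    have hd1 : (1 : ℝ) ≤ 1 + (n : ℝ) * t := by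
      have : (0:ℝ) ≤ (n:ℝ) * t := mul_nonneg (Nat.cast_nonneg n) ht.le
      linarith
    have hcard : (insert a u).card = u.card + 1 := Finset.card_insert_of_notMem ha
    have hru : r ∪ insert a u = insert a (r ∪ u) := by
      ext x; simp [Finset.mem_insert, Finset.mem_union, or_left_comm, or_comm]
    by_cases h : a ∈ r ∪ u
    · have : insert a (r ∪ u) = r ∪ u := Finset.insert_eq_self.mpr h
      rw [hru, this, hcard, pow_succ, ← mul_assoc]
      exact le_trans ih (le_mul_of_one_le_right
        (mul_nonneg (Amat_posDef X ht r).det_pos.le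
          (pow_nonneg (by linarith) u.card)) hd1)
    · rw [hru, hcard, pow_succ, ← mul_assoc]
      calc (Amat X t (insert a (r ∪ u))).det
          ≤ (Amat X t (r ∪ u)).det * (1 + (n:ℝ)*t) := det_insert_le X ht hcols h
        _ ≤ (Amat X t r).det * (1 + (n:ℝ)*t) ^ u.card * (1 + (n:ℝ)*t) :=
            mul_le_mul_of_nonneg_right ih (by linarith)

theorem stmt_1' {n p : ℕ} (hn : 1 ≤ n) (hp : 1 ≤ p) (X : Matrix (Fin n) (Fin p) ℝ)
    (t : ℝ) (ht : 0 < t)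
    (hcols : ∀ j : Fin p, (fun i => X i j) ⬝ᵥ (fun i => X i j) = (n : ℝ))
    (r s : Finset (Fin p)) (hrs : r ⊆ s) :
    ((1 : Matrix {j // j ∈ r} {j // j ∈ r} ℝ) + t • ((subcols X r)ᵀ * subcols X r)).det
        ^ (-(1 : ℝ) / 2) /
      (((1 : Matrix {j // j ∈ s} {j // j ∈ s} ℝ) + t • ((subcols X s)ᵀ * subcols X s)).det
        ^ (-(1 : ℝ) / 2))
      ≤ (1 + (n : ℝ) * t) ^ (((s \ r).card : ℝ) / 2) := by
  classical
  set d : ℝ := 1 + (n : ℝ) * t with hd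
  have hd0 : (0:ℝ) ≤ d := by
    have : (0:ℝ) ≤ (n:ℝ) * t := mul_nonneg (Nat.cast_nonneg n) ht.le
    simp [hd]; linarith
  set k := (s \ r).card with hk
  have hA : (Amat X t r).det > 0 := (Amat_posDef X ht r).det_pos
  have hB : (Amat X t s).det > 0 := (Amat_posDef X ht s).det_pos
  have hkey : (Amat X t s).det ≤ (Amat X t r).det * d ^ k := by
    have := det_union_le X ht hcols r (s \ r)
    rwa [Finset.union_sdiff_of_subset hrs] at this
  set a := (Amat X t r).det
  set b := (Amat X t s).det
  have h1 : a ^ (-(1:ℝ)/2) / b ^ (-(1:ℝ)/2) = (b / a) ^ ((1:ℝ)/2) := by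
    rw [neg_div, Real.rpow_neg hA.le, Real.rpow_neg hB.le, inv_div_inv,
      Real.div_rpow hB.le hA.le]
  have h2 : (b / a) ^ ((1:ℝ)/2) ≤ (d ^ k) ^ ((1:ℝ)/2) := by
    apply Real.rpow_le_rpow (by positivity) _ (by norm_num)
    rw [div_le_iff₀ hA]
    linarith [hkey]
  have h3 : (d ^ k : ℝ) ^ ((1:ℝ)/2) = d ^ ((k : ℝ)/2) := by
    rw [← Real.rpow_natCast d k, ← Real.rpow_mul hd0, mul_one_div]
  calc a ^ (-(1:ℝ)/2) / b ^ (-(1:ℝ)/2) = (b/a) ^ ((1:ℝ)/2) := h1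
    _ ≤ (d ^ k) ^ ((1:ℝ)/2) := h2
    _ = d ^ ((k:ℝ)/2) := h3

/-- If every column of `X` satisfies `‖X_j‖₂² = n`, `σ̃₀² > 0` and
`S_r ⊆ S_s`, then `D_r / D_s ≤ (1 + n σ̃₀²)^{|S_s \ S_r| / 2}`. -/
theorem stmt_1 {n p : ℕ} (hn : 1 ≤ n) (hp : 1 ≤ p) (X : Matrix (Fin n) (Fin p) ℝ)
    (t : ℝ) (ht : 0 < t)
    (hcols : ∀ j : Fin p, (fun i => X i j) ⬝ᵥ (fun i => X i j) = (n : ℝ))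
    (r s : Finset (Fin p)) (hrs : r ⊆ s) :
    Dmat X t r / Dmat X t s ≤ (1 + (n : ℝ) * t) ^ (((s \ r).card : ℝ) / 2) := by
  exact stmt_1' hn hp X t ht hcols r s hrs
end
end

section
/- Let X ∈ ℝ^{n×p}, β* ∈ ℝ^p, σ > 0, p > 1, and suppose ‖X β*‖₂² ≤ B₁ n σ² log p with B₁ ≥ 1, B₁ log p ≥ 3, and n ≥ 25 log p. Let y = X β* + e where e ~ N(0, σ² I_n). Then P[ ‖y‖₂² ≤ 3 n σ² B₁ log p ] ≥ 1 − 2 p^{−1}. -/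
noncomputable section

open Matrix MeasureTheory ProbabilityTheory

/-- The Gaussian measure `N(0, v Iₙ)` on `ℝⁿ`: `n` i.i.d. `N(0, v)` coordinates. -/
def gaussVec (n : ℕ) (v : NNReal) : Measure (Fin n → ℝ) :=
  Measure.pi fun _ => gaussianReal 0 v

namespace Stmt5Aux

open Real

lemma gauss_mul_exp_eq (v : NNReal) (hv : v ≠ 0) :
    (fun x : ℝ => (gaussianPDFReal 0 v x).toNNReal • Real.exp (((6:ℝ)*v)⁻¹ * x^2))
      = fun x : ℝ => (Real.sqrt (2*π*v))⁻¹ * Real.exp (-((3:ℝ)*v)⁻¹ * x^2) := by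
  have hv' : (v:ℝ) ≠ 0 := by exact_mod_cast hv
  funext x
  rw [NNReal.smul_def, smul_eq_mul,
    Real.coe_toNNReal _ (gaussianPDFReal_nonneg 0 v x), gaussianPDFReal]
  rw [mul_assoc, ← Real.exp_add]
  congr 1
  field_simp
  ring

lemma gauss_exp_integrable (v : NNReal) (hv : v ≠ 0) :
    Integrable (fun x : ℝ => Real.exp (((6:ℝ)*v)⁻¹ * x^2)) (gaussianReal 0 v) := by
  have hv' : (0:ℝ) < v := lt_of_le_of_ne v.coe_nonneg (by exact_mod_cast hv.symm)
  rw [gaussianReal_of_var_ne_zero _ hv]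
  rw [show gaussianPDF 0 v = fun x => (((gaussianPDFReal 0 v x).toNNReal : NNReal) : ENNReal)
    from rfl]
  rw [integrable_withDensity_iff_integrable_smul
    ((measurable_gaussianPDFReal 0 v).real_toNNReal)]
  rw [gauss_mul_exp_eq v hv]
  exact (integrable_exp_neg_mul_sq (by positivity)).const_mul _

lemma gauss_exp_integral (v : NNReal) (hv : v ≠ 0) :
    ∫ x : ℝ, Real.exp (((6:ℝ)*v)⁻¹ * x^2) ∂(gaussianReal 0 v) = Real.sqrt (3/2) := by
  have hv' : (0:ℝ) < v := lt_of_le_of_ne v.coe_nonneg (by exact_mod_cast hv.symm)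
  rw [gaussianReal_of_var_ne_zero _ hv]
  rw [show gaussianPDF 0 v = fun x => (((gaussianPDFReal 0 v x).toNNReal : NNReal) : ENNReal)
    from rfl]
  rw [integral_withDensity_eq_integral_smul ((measurable_gaussianPDFReal 0 v).real_toNNReal)]
  rw [gauss_mul_exp_eq v hv]
  rw [MeasureTheory.integral_const_mul, integral_gaussian]
  rw [← Real.sqrt_inv, ← Real.sqrt_mul (by positivity)]
  congr 1
  have hπ := Real.pi_pos
  field_simp

lemma gauss_chernoff (n : ℕ) (v : NNReal) (hv : v ≠ 0) :
    ((Measure.pi fun _ : Fin n => gaussianReal 0 v)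
        {x | 3/2 * n * v ≤ ∑ i, x i ^ 2}).toReal
      ≤ Real.exp (-(n/4)) * Real.sqrt (3/2) ^ n := by
  have hv' : (0:ℝ) < v := lt_of_le_of_ne v.coe_nonneg (by exact_mod_cast hv.symm)
  letI : MeasureSpace ℝ := ⟨gaussianReal 0 v⟩
  haveI : IsProbabilityMeasure (volume : Measure ℝ) :=
    instIsProbabilityMeasureGaussianReal 0 v
  haveI : IsProbabilityMeasure (Measure.pi fun _ : Fin n => gaussianReal 0 v) :=
    MeasureTheory.Measure.pi.instIsProbabilityMeasure _
  set t : ℝ := ((6:ℝ)*v)⁻¹ with ht_def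
  have ht : 0 ≤ t := by positivity
  have hprod : (fun x : Fin n → ℝ => Real.exp (t * ∑ i, x i ^ 2))
      = fun x => ∏ i, Real.exp (t * x i ^ 2) := by
    funext x
    rw [Finset.mul_sum, Real.exp_sum]
  have h_int : Integrable (fun x : Fin n → ℝ => Real.exp (t * ∑ i, x i ^ 2))
      (Measure.pi fun _ : Fin n => gaussianReal 0 v) := by
    rw [hprod]
    rw [show (Measure.pi fun _ : Fin n => gaussianReal 0 v)
      = (volume : Measure (Fin n → ℝ)) from (volume_pi).symm]
    exact Integrable.fintype_prod fun i => gauss_exp_integrable v hv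
  have h := measure_ge_le_exp_mul_mgf (μ := Measure.pi fun _ : Fin n => gaussianReal 0 v)
    (X := fun x => ∑ i, x i ^ 2) (3/2 * n * v) ht h_int
  refine h.trans ?_
  have hmgf : mgf (fun x : Fin n → ℝ => ∑ i, x i ^ 2)
      (Measure.pi fun _ : Fin n => gaussianReal 0 v) t = Real.sqrt (3/2) ^ n := by
    rw [mgf, hprod]
    rw [show (Measure.pi fun _ : Fin n => gaussianReal 0 v)
      = (volume : Measure (Fin n → ℝ)) from (volume_pi).symm]
    rw [volume_pi, MeasureTheory.integral_fintype_prod_eq_pow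
      (fun y : ℝ => Real.exp (t * y ^ 2))]
    rw [show ∫ x : ℝ, Real.exp (t * x ^ 2) = Real.sqrt (3/2) from gauss_exp_integral v hv]
    simp
  rw [hmgf]
  have : -t * (3/2 * n * v) = -(n/4) := by
    rw [ht_def]
    field_simp
    ring
  rw [this]

lemma numeric_bound (n p : ℕ) (hp : 1 < p) (hn25 : 25 * Real.log p ≤ (n : ℝ)) :
    Real.exp (-(n/4)) * Real.sqrt (3/2) ^ n ≤ 2 / p := by
  have hp0 : (0:ℝ) < p := by positivity
  have hp1 : (1:ℝ) ≤ p := by exact_mod_cast hp.le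
  have hlogp : 0 ≤ Real.log p := Real.log_nonneg hp1
  have hn0 : (0:ℝ) ≤ n := Nat.cast_nonneg n
  have h15 : Real.log (3/2) ≤ 21/50 := by
    have h5 : Real.log ((3/2:ℝ)^5) ≤ Real.log ((2:ℝ)^3) :=
      Real.log_le_log (by positivity) (by norm_num)
    rw [Real.log_pow, Real.log_pow] at h5
    push_cast at h5
    nlinarith [Real.log_two_lt_d9]
  have hs : Real.sqrt (3/2) ^ n = Real.exp ((n:ℝ) * (Real.log (3/2) / 2)) := by
    rw [Real.exp_nat_mul, ← Real.log_sqrt (by norm_num : (0:ℝ) ≤ 3/2),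
      Real.exp_log (by positivity)]
  rw [hs, ← Real.exp_add]
  have key : Real.exp (-((n:ℝ)/4) + (n:ℝ) * (Real.log (3/2) / 2)) ≤ 1 / p := by
    rw [show (1:ℝ)/p = Real.exp (-Real.log p) by
      rw [Real.exp_neg, Real.exp_log hp0, one_div]]
    apply Real.exp_le_exp.mpr
    nlinarith
  have h12 : (1:ℝ)/p ≤ 2/p := by
    gcongr
    norm_num
  linarith

end Stmt5Aux

/-- If `‖Xβ*‖₂² ≤ B₁ n σ² log p` with `B₁ ≥ 1`, `B₁ log p ≥ 3`,
`n ≥ 25 log p`, `p > 1`, and `y = Xβ* + e` with `e ~ N(0, σ² Iₙ)`, then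
`P[‖y‖₂² ≤ 3 n σ² B₁ log p] ≥ 1 − 2 p⁻¹`. -/
theorem stmt_5 (n p : ℕ) (hn : 1 ≤ n) (hp : 1 < p)
    (X : Matrix (Fin n) (Fin p) ℝ) (βs : Fin p → ℝ) (σ B₁ : ℝ)
    (hσ : 0 < σ) (hB₁ : 1 ≤ B₁)
    (hsig : (X.mulVec βs) ⬝ᵥ (X.mulVec βs) ≤ B₁ * n * σ ^ 2 * Real.log p)
    (hB₁p : 3 ≤ B₁ * Real.log p) (hn25 : 25 * Real.log p ≤ (n : ℝ)) :
    ENNReal.ofReal (1 - 2 / (p : ℝ)) ≤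
      gaussVec n (σ ^ 2).toNNReal
        {e | (X.mulVec βs + e) ⬝ᵥ (X.mulVec βs + e) ≤
          3 * n * σ ^ 2 * B₁ * Real.log p} := by
  have hp0 : (0:ℝ) < p := by positivity
  set v : NNReal := (σ^2).toNNReal with hv_def
  have hv0 : (v:ℝ) = σ^2 := Real.coe_toNNReal _ (sq_nonneg σ)
  have hv : v ≠ 0 := by
    rw [hv_def, Ne, Real.toNNReal_eq_zero, not_le]
    positivity
  haveI : IsProbabilityMeasure (gaussVec n v) := by
    rw [gaussVec]
    exact MeasureTheory.Measure.pi.instIsProbabilityMeasure _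
  set μm : Fin n → ℝ := X.mulVec βs with hμm
  set U : Set (Fin n → ℝ) := {x | 3/2 * (n:ℝ) * (v:ℝ) ≤ ∑ i, x i ^ 2} with hU_def
  set T : Set (Fin n → ℝ) := {x | ∑ i, x i ^ 2 ≤ 3/2 * (n:ℝ) * (v:ℝ)} with hT_def
  have hTS : T ⊆ {e | (μm + e) ⬝ᵥ (μm + e) ≤ 3*n*σ^2*B₁*Real.log p} := by
    intro x hx
    simp only [hT_def, Set.mem_setOf_eq] at hx ⊢
    have key : (μm + x) ⬝ᵥ (μm + x) ≤ 2 * (μm ⬝ᵥ μm) + 2 * ∑ i, x i ^ 2 := by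
      simp only [dotProduct, Pi.add_apply]
      rw [Finset.mul_sum, Finset.mul_sum, ← Finset.sum_add_distrib]
      refine Finset.sum_le_sum fun i _ => ?_
      nlinarith [sq_nonneg (μm i - x i)]
    have hnσ : (0:ℝ) ≤ (n:ℝ) * σ^2 := by positivity
    rw [hv0] at hx
    nlinarith [mul_le_mul_of_nonneg_left hB₁p hnσ]
  have hU : gaussVec n v U ≤ ENNReal.ofReal (2/(p:ℝ)) := by
    rw [ENNReal.le_ofReal_iff_toReal_le (measure_ne_top _ _) (by positivity)]
    calc (gaussVec n v U).toReal
        ≤ Real.exp (-(n/4)) * Real.sqrt (3/2) ^ n := Stmt5Aux.gauss_chernoff n v hv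
      _ ≤ 2/(p:ℝ) := Stmt5Aux.numeric_bound n p hp hn25
  have h1 : (1:ENNReal) ≤ gaussVec n v T + ENNReal.ofReal (2/(p:ℝ)) := by
    have huniv : (Set.univ : Set (Fin n → ℝ)) = T ∪ U := by
      ext x
      simp only [hT_def, hU_def, Set.mem_univ, Set.mem_union, Set.mem_setOf_eq, true_iff]
      exact le_total _ _
    calc (1:ENNReal) = gaussVec n v Set.univ := (measure_univ).symm
      _ = gaussVec n v (T ∪ U) := by rw [huniv]
      _ ≤ gaussVec n v T + gaussVec n v U := measure_union_le _ _
      _ ≤ gaussVec n v T + ENNReal.ofReal (2/(p:ℝ)) := by gcongr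
  calc ENNReal.ofReal (1 - 2/(p:ℝ)) = 1 - ENNReal.ofReal (2/(p:ℝ)) := by
        rw [← ENNReal.ofReal_one, ← ENNReal.ofReal_sub _ (by positivity)]
    _ ≤ gaussVec n v T := tsub_le_iff_right.mpr h1
    _ ≤ _ := measure_mono hTS
end
end

section
/- Let X ∈ ℝ^{n×p}, β* ∈ ℝ^p, σ, σ₀ > 0, σ̃₀² = σ₀²/σ², p > 1, and let r ∈ {0,1}^p be such that X_r has full column rank with λ_min(n^{-1} X_r^T X_r) ≥ ν for some ν > 0. Suppose ‖X β*‖₂² ≤ B₁ n σ² log p with B₁ ≥ 1, B₁ log p ≥ 3, and n ≥ 25 log p. Let y = X β* + e with e ~ N(0, σ² I_n). Then P[ R_r − R_r^* ≤ 3 B₁ σ² log p / (ν σ̃₀²) ] ≥ 1 − 2 p^{−1}. -/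
open Matrix

noncomputable section

/-- `R_S = yᵀ(Iₙ − X_S(X_Sᵀ X_S + σ̃₀⁻² I)⁻¹ X_Sᵀ) y` (here `t = σ̃₀²`). -/
def Rreg {n p : ℕ} (X : Matrix (Fin n) (Fin p) ℝ) (S : Finset (Fin p)) (t : ℝ)
    (y : Fin n → ℝ) : ℝ :=
  y ⬝ᵥ (((1 : Matrix (Fin n) (Fin n) ℝ) -
      subcols X S * ((subcols X S)ᵀ * subcols X S + t⁻¹ • 1)⁻¹ * (subcols X S)ᵀ).mulVec y)

/-- `R_S^* = yᵀ(Iₙ − Φ_S) y`. -/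
def Rstar {n p : ℕ} (X : Matrix (Fin n) (Fin p) ℝ) (S : Finset (Fin p))
    (y : Fin n → ℝ) : ℝ :=
  y ⬝ᵥ (((1 : Matrix (Fin n) (Fin n) ℝ) - proj X S).mulVec y)

open Matrix MeasureTheory ProbabilityTheory

open MeasureTheory ProbabilityTheory Real
open scoped ENNReal NNReal

theorem my_lintegral_pi_pow (m : Measure ℝ) [SigmaFinite m] (g : ℝ → ℝ≥0∞)
    (hg : Measurable g) (n : ℕ) :
    ∫⁻ x : Fin n → ℝ, ∏ i, g (x i) ∂Measure.pi (fun _ => m) = (∫⁻ y, g y ∂m) ^ n := by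
  induction n with
  | zero => simp
  | succ n ih =>
    have hmp := (measurePreserving_piFinSuccAbove (fun _ : Fin (n+1) => m) 0).symm
    rw [← hmp.map_eq, lintegral_map (by
        exact Finset.measurable_prod _ fun i _ => hg.comp (measurable_pi_apply i))
      (MeasurableEquiv.piFinSuccAbove _ 0).symm.measurable]
    have heq : ∀ a : ℝ × (Fin n → ℝ),
        (∏ i : Fin (n+1), g ((MeasurableEquiv.piFinSuccAbove (fun _ => ℝ) 0).symm a i))
          = g a.1 * ∏ i : Fin n, g (a.2 i) := by
      intro a
      rw [Fin.prod_univ_succ]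
      have h0 : (MeasurableEquiv.piFinSuccAbove (fun _ => ℝ) 0).symm a 0 = a.1 := by
        simp [MeasurableEquiv.piFinSuccAbove_symm_apply]
      have hs : ∀ i : Fin n,
          (MeasurableEquiv.piFinSuccAbove (fun _ => ℝ) 0).symm a i.succ = a.2 i := by
        intro i; simp [MeasurableEquiv.piFinSuccAbove_symm_apply, Fin.zero_succAbove]
      rw [h0]
      exact congrArg _ (Finset.prod_congr rfl fun i _ => by rw [hs])
    simp_rw [heq]
    rw [lintegral_prod_mul (f := g) (g := fun b : Fin n → ℝ => ∏ i : Fin n, g (b i))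
      hg.aemeasurable
      (Finset.measurable_prod _ fun i _ => hg.comp (measurable_pi_apply i)).aemeasurable,
      ih, pow_succ, mul_comm]

theorem my_gauss_mgf (v : ℝ≥0) (hv : 0 < (v:ℝ)) :
    ∫⁻ x : ℝ, ENNReal.ofReal (Real.exp (x^2 / (6*(v:ℝ)))) ∂gaussianReal 0 v
      = ENNReal.ofReal (Real.sqrt (3/2)) := by
  have hv0 : v ≠ 0 := fun h => by simp [h] at hv
  rw [gaussianReal_of_var_ne_zero _ hv0]
  rw [lintegral_withDensity_eq_lintegral_mul _ (measurable_gaussianPDF _ _)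
    (by exact (measurable_id.pow_const 2).div_const _ |>.exp.ennreal_ofReal)]
  have hfun : ∀ x : ℝ, (gaussianPDF 0 v x) * ENNReal.ofReal (Real.exp (x^2 / (6*(v:ℝ))))
      = ENNReal.ofReal ((√(2 * π * v))⁻¹ * Real.exp (-(1/(3*(v:ℝ))) * x^2)) := by
    intro x
    rw [gaussianPDF, ← ENNReal.ofReal_mul (gaussianPDFReal_nonneg _ _ _)]
    congr 1
    rw [gaussianPDFReal, mul_assoc, ← Real.exp_add]
    congr 2
    field_simp
    ring
  simp only [Pi.mul_apply, hfun]
  rw [← ofReal_integral_eq_lintegral_ofReal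
    (((integrable_exp_neg_mul_sq (by positivity : (0:ℝ) < 1/(3*(v:ℝ)))).const_mul _))
    (ae_of_all _ fun x => by positivity)]
  rw [integral_const_mul, integral_gaussian]
  congr 1
  rw [← Real.sqrt_inv, ← Real.sqrt_mul (by positivity)]
  congr 1
  field_simp

theorem my_log32 : Real.log (3/2) ≤ 21/50 := by
  rw [Real.log_le_iff_le_exp (by norm_num)]
  have h1 : ((421:ℝ)/400)^8 ≤ Real.exp (21/50) := by
    have : Real.exp (21/50) = (Real.exp (21/400))^8 := by
      rw [← Real.exp_nat_mul]; norm_num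
    rw [this]
    have h2 := Real.add_one_le_exp ((21:ℝ)/400)
    gcongr
    linarith
  have h3 : (3:ℝ)/2 ≤ ((421:ℝ)/400)^8 := by norm_num
  linarith

theorem my_chern (n pp : ℕ) (hp : 2 ≤ pp) (σ : ℝ) (hσ : 0 < σ)
    (hn25 : 25 * Real.log pp ≤ (n : ℝ)) :
    Measure.pi (fun _ : Fin n => gaussianReal 0 (σ^2).toNNReal)
      {e | 3/2 * n * σ^2 < ∑ i, (e i)^2} ≤ ENNReal.ofReal (1/pp) := by
  set v : ℝ≥0 := (σ^2).toNNReal with hvdef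
  have hvc : (v:ℝ) = σ^2 := Real.coe_toNNReal _ (by positivity)
  have hv : 0 < (v:ℝ) := by rw [hvc]; positivity
  set μ := Measure.pi (fun _ : Fin n => gaussianReal 0 v) with hμ
  set g : ℝ → ℝ≥0∞ := fun x => ENNReal.ofReal (Real.exp (x^2 / (6*(v:ℝ)))) with hg
  have hgm : Measurable g := by
    exact ((measurable_id.pow_const 2).div_const _).exp.ennreal_ofReal
  set f : (Fin n → ℝ) → ℝ≥0∞ := fun e => ∏ i, g (e i) with hf
  have hfm : Measurable f := Finset.measurable_prod _ fun i _ => hgm.comp (measurable_pi_apply i)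
  set ε : ℝ≥0∞ := ENNReal.ofReal (Real.exp ((n:ℝ)/4)) with hε
  have hεpos : 0 < Real.exp ((n:ℝ)/4) := Real.exp_pos _
  have hsub : {e : Fin n → ℝ | 3/2 * n * σ^2 < ∑ i, (e i)^2} ⊆ {e | ε ≤ f e} := by
    intro e he
    simp only [Set.mem_setOf_eq] at he ⊢
    have hfe : f e = ENNReal.ofReal (Real.exp ((∑ i, (e i)^2) / (6*(v:ℝ)))) := by
      rw [hf]
      simp only [hg]
      rw [← ENNReal.ofReal_prod_of_nonneg (fun i _ => (Real.exp_pos _).le)]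
      congr 1
      rw [← Real.exp_sum]
      congr 1
      rw [Finset.sum_div]
    rw [hfe, hε]
    apply ENNReal.ofReal_le_ofReal
    apply Real.exp_le_exp.2
    rw [div_le_div_iff₀ (by norm_num) (by rw [hvc]; positivity)]
    rw [hvc]
    nlinarith [he]
  have hmark := mul_meas_ge_le_lintegral₀ (μ := μ) hfm.aemeasurable ε
  have hint : ∫⁻ e, f e ∂μ = (ENNReal.ofReal (Real.sqrt (3/2)))^n := by
    rw [hμ, hf, my_lintegral_pi_pow _ _ hgm, my_gauss_mgf v hv]
  have hμle : μ {e | 3/2 * n * σ^2 < ∑ i, (e i)^2} ≤ ε⁻¹ * (ENNReal.ofReal (Real.sqrt (3/2)))^n := by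
    calc μ {e | 3/2 * n * σ^2 < ∑ i, (e i)^2} ≤ μ {e | ε ≤ f e} := measure_mono hsub
    _ = ε⁻¹ * (ε * μ {e | ε ≤ f e}) := by
        rw [← mul_assoc, ENNReal.inv_mul_cancel (by simp [hε, hεpos]) (by simp [hε]), one_mul]
    _ ≤ ε⁻¹ * ∫⁻ e, f e ∂μ := by gcongr
    _ = _ := by rw [hint]
  refine hμle.trans ?_
  rw [hε, ← ENNReal.ofReal_inv_of_pos hεpos, ← Real.exp_neg,
    ← ENNReal.ofReal_pow (Real.sqrt_nonneg _), ← ENNReal.ofReal_mul (Real.exp_pos _).le]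
  apply ENNReal.ofReal_le_ofReal
  -- real inequality: exp(-(n/4)) * sqrt(3/2)^n ≤ 1/pp
  have hsq : Real.sqrt (3/2) ^ n = Real.exp ((n:ℝ) * (Real.log (3/2) / 2)) := by
    rw [Real.sqrt_eq_rpow, ← Real.rpow_natCast (((3:ℝ)/2) ^ ((1:ℝ)/2)) n,
      ← Real.rpow_mul (by norm_num)]
    rw [Real.rpow_def_of_pos (by norm_num)]
    ring_nf
  rw [hsq, ← Real.exp_add]
  have hplog : 0 < Real.log pp := Real.log_pos (by exact_mod_cast hp)
  have h1p : (1:ℝ)/pp = Real.exp (-(Real.log pp)) := by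
    rw [Real.exp_neg, Real.exp_log (by positivity)]
    norm_num
  rw [h1p]
  apply Real.exp_le_exp.2
  have hc : Real.log pp ≤ (n:ℝ) * (1/25) := by
    linarith
  nlinarith [my_log32, Nat.cast_nonneg (α := ℝ) n]

set_option maxHeartbeats 1000000 in
theorem my_det_bound {n p : ℕ} (hn : 1 ≤ n)
    (X : Matrix (Fin n) (Fin p) ℝ) (r : Finset (Fin p))
    (hrank : IsUnit ((subcols X r)ᵀ * subcols X r).det)
    (ν : ℝ) (hν : 0 < ν)
    (hmin : ∀ v : {j // j ∈ r} → ℝ,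
      ν * (v ⬝ᵥ v) ≤ v ⬝ᵥ ((((n : ℝ)⁻¹) • ((subcols X r)ᵀ * subcols X r)).mulVec v))
    (t : ℝ) (ht : 0 < t) (a e : Fin n → ℝ) :
    Rreg X r t (a + e) - Rstar X r (a + e) ≤
      t⁻¹ / (ν * n) * (2 * (a ⬝ᵥ a) + 2 * (e ⬝ᵥ e)) := by
  classical
  set A := subcols X r with hA
  set M := Aᵀ * A with hM
  have hnR : (0:ℝ) < n := by exact_mod_cast hn
  -- symmetry of M
  have hMsym : Mᵀ = M := by rw [hM, transpose_mul, transpose_transpose]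
  have hsymM : ∀ u w : {j // j ∈ r} → ℝ, u ⬝ᵥ M.mulVec w = (M.mulVec u) ⬝ᵥ w := by
    intro u w
    rw [dotProduct_mulVec, ← hMsym, vecMul_transpose, hMsym]
  -- positivity of M
  have hMpos : ∀ u : {j // j ∈ r} → ℝ, ν * n * (u ⬝ᵥ u) ≤ u ⬝ᵥ M.mulVec u := by
    intro u
    have h := hmin u
    rw [smul_mulVec, dotProduct_smul, smul_eq_mul] at h
    have := mul_le_mul_of_nonneg_left h hnR.le
    calc ν * n * (u ⬝ᵥ u) = n * (ν * (u ⬝ᵥ u)) := by ring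
    _ ≤ n * ((n:ℝ)⁻¹ * (u ⬝ᵥ M.mulVec u)) := this
    _ = u ⬝ᵥ M.mulVec u := by field_simp
  have hMself : ∀ u : {j // j ∈ r} → ℝ, 0 ≤ u ⬝ᵥ u := fun u =>
    Finset.sum_nonneg fun i _ => mul_self_nonneg _
  -- N and its invertibility
  set N := M + t⁻¹ • (1 : Matrix {j // j ∈ r} {j // j ∈ r} ℝ) with hN
  have hNmulVec : ∀ u, N.mulVec u = M.mulVec u + t⁻¹ • u := by
    intro u
    rw [hN, add_mulVec, smul_mulVec, one_mulVec]
  have hNposdef : N.PosDef := by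
    rw [posDef_iff_dotProduct_mulVec]
    constructor
    · show Nᴴ = N
      have hNt : Nᵀ = N := by rw [hN, transpose_add, hMsym, transpose_smul, transpose_one]
      ext i j
      have := congrFun (congrFun hNt i) j
      simp only [transpose_apply] at this
      simp [conjTranspose_apply, star_trivial, this]
    · intro x hx
      have hxx : 0 < x ⬝ᵥ x := by
        obtain ⟨i, hi⟩ := Function.ne_iff.1 hx
        have : (x i) * (x i) ≤ x ⬝ᵥ x := by
          refine Finset.single_le_sum (f := fun j => x j * x j) (fun j _ => mul_self_nonneg _) (Finset.mem_univ i)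
        nlinarith [mul_self_pos.2 hi]
      have h1 := hMpos x
      have : (0:ℝ) < x ⬝ᵥ N.mulVec x := by
        rw [hNmulVec, dotProduct_add, dotProduct_smul, smul_eq_mul]
        have h2 : 0 < t⁻¹ * (x ⬝ᵥ x) := by positivity
        linarith [h1, h2, mul_pos (mul_pos hν hnR) hxx]
      simpa [star_trivial] using this
  have hNdet : IsUnit N.det := hNposdef.det_pos.ne'.isUnit
  -- inverses
  have hMinv : M * M⁻¹ = 1 := mul_nonsing_inv _ hrank
  have hMinv' : M⁻¹ * M = 1 := nonsing_inv_mul _ hrank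
  have hNinv : N * N⁻¹ = 1 := mul_nonsing_inv _ hNdet
  -- main vectors
  set y := a + e with hy
  set v := Aᵀ.mulVec y with hv
  set w := N⁻¹.mulVec v with hw
  set z := M⁻¹.mulVec w with hz
  have hvw : v = M.mulVec w + t⁻¹ • w := by
    rw [← hNmulVec, hw, mulVec_mulVec, hNinv, one_mulVec]
  have hwz : w = M.mulVec z := by
    rw [hz, mulVec_mulVec, hMinv, one_mulVec]
  -- generic adjoint identity
  have hAdot : ∀ (x : Fin n → ℝ) (u : {j // j ∈ r} → ℝ),
      x ⬝ᵥ A.mulVec u = (Aᵀ.mulVec x) ⬝ᵥ u := by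
    intro x u
    rw [dotProduct_mulVec, mulVec_transpose]
  have hMisym : M⁻¹ᵀ = M⁻¹ := by rw [transpose_nonsing_inv, hMsym]
  have hsymMi : ∀ u w : {j // j ∈ r} → ℝ, u ⬝ᵥ M⁻¹.mulVec w = (M⁻¹.mulVec u) ⬝ᵥ w := by
    intro u w
    rw [dotProduct_mulVec, ← hMisym, vecMul_transpose, hMisym]
  -- the projection quadratic form
  set P : (Fin n → ℝ) → ℝ := fun x => (Aᵀ.mulVec x) ⬝ᵥ (M⁻¹.mulVec (Aᵀ.mulVec x)) with hP
  have hPeq : ∀ x : Fin n → ℝ,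
      P x = (A.mulVec (M⁻¹.mulVec (Aᵀ.mulVec x))) ⬝ᵥ (A.mulVec (M⁻¹.mulVec (Aᵀ.mulVec x))) := by
    intro x
    have hPx : P x = (Aᵀ.mulVec x) ⬝ᵥ (M⁻¹.mulVec (Aᵀ.mulVec x)) := rfl
    rw [hPx]
    symm
    rw [hAdot, mulVec_mulVec, ← hM, mulVec_mulVec, hMinv, one_mulVec]
  have hPnn : ∀ x : Fin n → ℝ, 0 ≤ P x := by
    intro x
    rw [hPeq]
    exact Finset.sum_nonneg fun i _ => mul_self_nonneg _
  have hdotnn : ∀ x : Fin n → ℝ, 0 ≤ x ⬝ᵥ x := fun x =>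
    Finset.sum_nonneg fun i _ => mul_self_nonneg _
  have hCSn : ∀ x u : Fin n → ℝ, (x ⬝ᵥ u)^2 ≤ (x ⬝ᵥ x) * (u ⬝ᵥ u) := by
    intro x u
    have h := Finset.sum_mul_sq_le_sq_mul_sq Finset.univ x u
    simpa [dotProduct, sq] using h
  have hPle : ∀ x : Fin n → ℝ, P x ≤ x ⬝ᵥ x := by
    intro x
    have h1 : P x = x ⬝ᵥ (A.mulVec (M⁻¹.mulVec (Aᵀ.mulVec x))) := by
      rw [hAdot]
    have h2 := hCSn x (A.mulVec (M⁻¹.mulVec (Aᵀ.mulVec x)))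
    rw [← h1, ← hPeq] at h2
    nlinarith [hPnn x, hdotnn x]
  -- parallelogram
  have hPpar : P (a + e) ≤ 2 * P a + 2 * P e := by
    have hcross : ∀ x u : Fin n → ℝ,
        (Aᵀ.mulVec x) ⬝ᵥ (M⁻¹.mulVec (Aᵀ.mulVec u))
          = (Aᵀ.mulVec u) ⬝ᵥ (M⁻¹.mulVec (Aᵀ.mulVec x)) := by
      intro x u
      rw [hsymMi, dotProduct_comm]
    have hsub : 0 ≤ P (a - e) := hPnn _
    have hexp1 : P (a + e) = P a + P e
        + 2 * ((Aᵀ.mulVec a) ⬝ᵥ (M⁻¹.mulVec (Aᵀ.mulVec e))) := by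
      have h0 : P (a + e) = (Aᵀ.mulVec (a+e)) ⬝ᵥ (M⁻¹.mulVec (Aᵀ.mulVec (a+e))) := rfl
      have ha : P a = (Aᵀ.mulVec a) ⬝ᵥ (M⁻¹.mulVec (Aᵀ.mulVec a)) := rfl
      have he : P e = (Aᵀ.mulVec e) ⬝ᵥ (M⁻¹.mulVec (Aᵀ.mulVec e)) := rfl
      rw [h0, ha, he]
      simp only [mulVec_add, dotProduct_add, add_dotProduct]
      rw [hcross e a]
      ring
    have hexp2 : P (a - e) = P a + P e
        - 2 * ((Aᵀ.mulVec a) ⬝ᵥ (M⁻¹.mulVec (Aᵀ.mulVec e))) := by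
      have h0 : P (a - e) = (Aᵀ.mulVec (a-e)) ⬝ᵥ (M⁻¹.mulVec (Aᵀ.mulVec (a-e))) := rfl
      have ha : P a = (Aᵀ.mulVec a) ⬝ᵥ (M⁻¹.mulVec (Aᵀ.mulVec a)) := rfl
      have he : P e = (Aᵀ.mulVec e) ⬝ᵥ (M⁻¹.mulVec (Aᵀ.mulVec e)) := rfl
      rw [h0, ha, he]
      simp only [mulVec_sub, dotProduct_sub, sub_dotProduct]
      rw [hcross e a]
      ring
    linarith
  -- scalar quantities
  have hq0 : (0:ℝ) ≤ w ⬝ᵥ w := hMself w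
  have hq1 : ν * n * (w ⬝ᵥ w) ≤ w ⬝ᵥ M.mulVec w := hMpos w
  have hq3 : (0:ℝ) ≤ z ⬝ᵥ z := hMself z
  have hq23 : ν * n * (z ⬝ᵥ z) ≤ z ⬝ᵥ M.mulVec z := hMpos z
  have hq2w : z ⬝ᵥ M.mulVec z = z ⬝ᵥ w := by rw [← hwz]
  have hCSzw : (z ⬝ᵥ w)^2 ≤ (z ⬝ᵥ z) * (w ⬝ᵥ w) := by
    have h := Finset.sum_mul_sq_le_sq_mul_sq Finset.univ z w
    simpa [dotProduct, sq] using h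
  have hq2nn : 0 ≤ z ⬝ᵥ M.mulVec z := le_trans (by positivity) hq23
  have hkey : ν * n * (z ⬝ᵥ M.mulVec z) ≤ w ⬝ᵥ w := by
    rcases eq_or_lt_of_le hq2nn with h | h
    · rw [← h]; simpa using hq0
    · have h1 := mul_le_mul_of_nonneg_left hCSzw (le_of_lt (mul_pos hν hnR))
      rw [← hq2w] at h1
      have h2 := mul_le_mul_of_nonneg_right hq23 hq0
      have h3 : (ν * ↑n * (z ⬝ᵥ M.mulVec z)) * (z ⬝ᵥ M.mulVec z)
          ≤ (w ⬝ᵥ w) * (z ⬝ᵥ M.mulVec z) := by nlinarith [h1, h2]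
      exact le_of_mul_le_mul_right h3 h
  -- identities for Rreg and Rstar
  have hRreg : Rreg X r t y = y ⬝ᵥ y - v ⬝ᵥ w := by
    unfold Rreg
    rw [← hA, ← hM, ← hN, sub_mulVec, one_mulVec, dotProduct_sub]
    congr 1
    rw [← mulVec_mulVec, ← mulVec_mulVec, hAdot, ← hv, ← hw]
  have hRstar : Rstar X r y = y ⬝ᵥ y - v ⬝ᵥ (M⁻¹.mulVec v) := by
    unfold Rstar proj
    rw [← hA, ← hM, sub_mulVec, one_mulVec, dotProduct_sub]
    congr 1
    rw [← mulVec_mulVec, ← mulVec_mulVec, hAdot, ← hv]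
  -- inverse applied to v
  have hMiv : M⁻¹.mulVec v = w + t⁻¹ • z := by
    rw [hvw, mulVec_add, mulVec_mulVec, hMinv', one_mulVec, mulVec_smul, ← hz]
  -- expand quadratic forms in scalars
  have hvMiv : v ⬝ᵥ (M⁻¹.mulVec v)
      = w ⬝ᵥ M.mulVec w + 2 * t⁻¹ * (w ⬝ᵥ w) + t⁻¹^2 * (z ⬝ᵥ M.mulVec z) := by
    rw [hMiv]
    nth_rewrite 1 [hvw]
    rw [add_dotProduct, dotProduct_add, dotProduct_add, smul_dotProduct, smul_dotProduct,
      dotProduct_smul, dotProduct_smul]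
    have h1 : (M.mulVec w) ⬝ᵥ w = w ⬝ᵥ M.mulVec w := by rw [← hsymM]
    have h2 : (M.mulVec w) ⬝ᵥ z = w ⬝ᵥ w := by
      rw [← hsymM w z, ← hwz]
    have h3 : w ⬝ᵥ z = z ⬝ᵥ M.mulVec z := by
      rw [hq2w, dotProduct_comm]
    rw [h1, h2, h3]
    simp only [smul_eq_mul]
    ring
  have hvw2 : v ⬝ᵥ w = w ⬝ᵥ M.mulVec w + t⁻¹ * (w ⬝ᵥ w) := by
    nth_rewrite 1 [hvw]
    rw [add_dotProduct, smul_dotProduct]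
    have h1 : (M.mulVec w) ⬝ᵥ w = w ⬝ᵥ M.mulVec w := by rw [← hsymM]
    rw [h1]
    simp only [smul_eq_mul]
  have hPy : P y = v ⬝ᵥ (M⁻¹.mulVec v) := rfl
  -- the difference
  have hD : Rreg X r t y - Rstar X r y
      = t⁻¹ * (w ⬝ᵥ w) + t⁻¹^2 * (z ⬝ᵥ M.mulVec z) := by
    rw [hRreg, hRstar, hvMiv, hvw2]; ring
  have htpos : 0 < t⁻¹ := by positivity
  have hstep1 : Rreg X r t y - Rstar X r y ≤ t⁻¹ / (ν * n) * P y := by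
    rw [hD, hPy, hvMiv, div_mul_eq_mul_div, le_div_iff₀ (by positivity : (0:ℝ) < ν * n)]
    have k1 : t⁻¹ * (ν * ↑n * (w ⬝ᵥ w)) ≤ t⁻¹ * (w ⬝ᵥ M.mulVec w) :=
      mul_le_mul_of_nonneg_left hq1 htpos.le
    have k2 : t⁻¹^2 * (ν * ↑n * (z ⬝ᵥ M.mulVec z)) ≤ t⁻¹^2 * (w ⬝ᵥ w) :=
      mul_le_mul_of_nonneg_left hkey (by positivity)
    have k3 : (0:ℝ) ≤ t⁻¹^3 * (z ⬝ᵥ M.mulVec z) := mul_nonneg (by positivity) hq2nn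
    have k4 : (0:ℝ) ≤ t⁻¹^2 * (w ⬝ᵥ w) := mul_nonneg (by positivity) hq0
    nlinarith [k1, k2, k3, k4]
  have hstep2 : P y ≤ 2 * (a ⬝ᵥ a) + 2 * (e ⬝ᵥ e) := by
    have := hPpar
    have h2 := hPle a
    have h3 := hPle e
    rw [hy]
    linarith
  calc Rreg X r t y - Rstar X r y ≤ t⁻¹ / (ν * n) * P y := hstep1
  _ ≤ t⁻¹ / (ν * n) * (2 * (a ⬝ᵥ a) + 2 * (e ⬝ᵥ e)) := by
      apply mul_le_mul_of_nonneg_left hstep2 (by positivity)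



/-- Under the signal-size, eigenvalue and sample-size conditions, with
`y = Xβ* + e`, `e ~ N(0, σ² Iₙ)` and `σ̃₀² = σ₀²/σ²`,
`P[R_r − R_r^* ≤ 3 B₁ σ² log p / (ν σ̃₀²)] ≥ 1 − 2 p⁻¹`. -/
theorem stmt_6 (n p : ℕ) (hn : 1 ≤ n) (hp : 1 < p)
    (X : Matrix (Fin n) (Fin p) ℝ) (βs : Fin p → ℝ) (σ σ₀ : ℝ)
    (hσ : 0 < σ) (hσ₀ : 0 < σ₀)
    (r : Finset (Fin p)) (hrank : IsUnit ((subcols X r)ᵀ * subcols X r).det)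
    (ν : ℝ) (hν : 0 < ν)
    (hmin : ∀ v : {j // j ∈ r} → ℝ,
      ν * (v ⬝ᵥ v) ≤ v ⬝ᵥ ((((n : ℝ)⁻¹) • ((subcols X r)ᵀ * subcols X r)).mulVec v))
    (B₁ : ℝ) (hB₁ : 1 ≤ B₁)
    (hsig : (X.mulVec βs) ⬝ᵥ (X.mulVec βs) ≤ B₁ * n * σ ^ 2 * Real.log p)
    (hB₁p : 3 ≤ B₁ * Real.log p) (hn25 : 25 * Real.log p ≤ (n : ℝ)) :
    ENNReal.ofReal (1 - 2 / (p : ℝ)) ≤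
      gaussVec n (σ ^ 2).toNNReal
        {e | Rreg X r (σ₀ ^ 2 / σ ^ 2) (X.mulVec βs + e) -
              Rstar X r (X.mulVec βs + e) ≤
            3 * B₁ * σ ^ 2 * Real.log p / (ν * (σ₀ ^ 2 / σ ^ 2))} := by
  classical
  have hp2 : 2 ≤ p := hp
  have hpR : (2:ℝ) ≤ p := by exact_mod_cast hp2
  have hL : 0 < Real.log p := Real.log_pos (by exact_mod_cast hp)
  have ht : 0 < σ₀^2/σ^2 := by positivity
  set t : ℝ := σ₀^2/σ^2 with htdef
  set a : Fin n → ℝ := X.mulVec βs with hadef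
  set v : ℝ≥0 := (σ^2).toNNReal with hvdef
  set μ := gaussVec n v with hμdef
  haveI : IsProbabilityMeasure μ := by
    rw [hμdef]
    unfold gaussVec
    infer_instance
  set E : Set (Fin n → ℝ) := {e | ∑ i, (e i)^2 ≤ 3/2 * n * σ^2} with hEdef
  have hnR : (0:ℝ) < n := by exact_mod_cast hn
  -- deterministic inclusion
  have hsubset : E ⊆ {e | Rreg X r t (a + e) - Rstar X r (a + e) ≤
      3 * B₁ * σ ^ 2 * Real.log p / (ν * t)} := by
    intro e he
    simp only [hEdef, Set.mem_setOf_eq] at he ⊢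
    have hd := my_det_bound hn X r hrank ν hν hmin t ht a e
    have hdot : e ⬝ᵥ e = ∑ i, e i ^ 2 := by simp [dotProduct, pow_two]
    have hee : e ⬝ᵥ e ≤ 3/2 * n * σ^2 := by rw [hdot]; exact he
    have haa : a ⬝ᵥ a ≤ B₁ * n * σ^2 * Real.log p := hsig
    have hS : 2 * (a ⬝ᵥ a) + 2 * (e ⬝ᵥ e) ≤ 3 * (B₁ * n * σ^2 * Real.log p) := by
      have h3 : 3 * (n * σ^2) ≤ B₁ * Real.log p * (n * σ^2) :=
        mul_le_mul_of_nonneg_right hB₁p (by positivity)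
      nlinarith [hee, haa]
    have hmul : (σ₀^2/σ^2)⁻¹ / (ν * n) * (2 * (a ⬝ᵥ a) + 2 * (e ⬝ᵥ e))
        ≤ (σ₀^2/σ^2)⁻¹ / (ν * n) * (3 * (B₁ * n * σ^2 * Real.log p)) := by
      apply mul_le_mul_of_nonneg_left hS (by positivity)
    have heq : (σ₀^2/σ^2)⁻¹ / (ν * n) * (3 * (B₁ * n * σ^2 * Real.log p))
        = 3 * B₁ * σ ^ 2 * Real.log p / (ν * (σ₀^2/σ^2)) := by
      field_simp
    calc Rreg X r t (a + e) - Rstar X r (a + e)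
        ≤ t⁻¹ / (ν * ↑n) * (2 * (a ⬝ᵥ a) + 2 * (e ⬝ᵥ e)) := hd
      _ ≤ 3 * B₁ * σ ^ 2 * Real.log p / (ν * t) := by rw [htdef]; rw [heq] at hmul; exact hmul
  -- probability bound
  have hcompl : Eᶜ = {e : Fin n → ℝ | 3/2 * n * σ^2 < ∑ i, (e i)^2} := by
    ext e
    simp [hEdef, not_le]
  have hEm : MeasurableSet E := by
    rw [hEdef]
    exact measurableSet_le (Finset.measurable_sum _ fun i _ =>
      (measurable_pi_apply i).pow_const 2) measurable_const
  have hchern : μ Eᶜ ≤ ENNReal.ofReal (1/p) := by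
    rw [hcompl, hμdef]
    unfold gaussVec
    exact my_chern n p hp2 σ hσ hn25
  have hEmeas : μ E = 1 - μ Eᶜ := by
    have := prob_compl_eq_one_sub (μ := μ) hEm.compl
    rw [compl_compl] at this
    rw [this]
  have hfinal : ENNReal.ofReal (1 - 2 / (p : ℝ)) ≤ μ E := by
    rw [hEmeas]
    have h1 : ENNReal.ofReal (1 - 2 / (p : ℝ)) ≤ 1 - ENNReal.ofReal (1/p) := by
      have : (1:ℝ≥0∞) = ENNReal.ofReal 1 := by simp
      rw [this, ← ENNReal.ofReal_sub _ (by positivity : (0:ℝ) ≤ 1/p)]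
      apply ENNReal.ofReal_le_ofReal
      have h2 : (1:ℝ)/p ≤ 2/p := by gcongr <;> norm_num
      linarith
    exact h1.trans (tsub_le_tsub_left hchern 1)
  exact hfinal.trans (measure_mono hsubset)
end
end

section
/- Suppose X_r has full column rank with λ_min(n^{-1} X_r^T X_r) ≥ ν for some ν > 0, and let σ̃₀² > 0. Then for every y ∈ ℝⁿ, 0 ≤ R_r − R_r^* ≤ ‖y‖₂² / (n ν σ̃₀²). -/
open Matrix

noncomputable section

/-- If `X_r` has full column rank with `λ_min(n⁻¹ X_rᵀ X_r) ≥ ν > 0`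
(stated via the quadratic form) and `σ̃₀² > 0` (`t = σ̃₀²`), then for every `y ∈ ℝⁿ`,
`0 ≤ R_r − R_r^* ≤ ‖y‖₂² / (n ν σ̃₀²)`. -/
theorem stmt_7 {n p : ℕ} (hn : 1 ≤ n) (X : Matrix (Fin n) (Fin p) ℝ) (r : Finset (Fin p))
    (hrank : IsUnit ((subcols X r)ᵀ * subcols X r).det)
    (ν : ℝ) (hν : 0 < ν)
    (hmin : ∀ v : {j // j ∈ r} → ℝ,
      ν * (v ⬝ᵥ v) ≤ v ⬝ᵥ ((((n : ℝ)⁻¹) • ((subcols X r)ᵀ * subcols X r)).mulVec v))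
    (t : ℝ) (ht : 0 < t) (y : Fin n → ℝ) :
    0 ≤ Rreg X r t y - Rstar X r y ∧
      Rreg X r t y - Rstar X r y ≤ (y ⬝ᵥ y) / ((n : ℝ) * ν * t) := by
  classical
  have hn' : (1:ℝ) ≤ (n:ℝ) := by exact_mod_cast hn
  have hnpos : (0:ℝ) < (n:ℝ) := lt_of_lt_of_le one_pos hn'
  simp only [Rreg, Rstar, proj]
  set A : Matrix (Fin n) {j // j ∈ r} ℝ := subcols X r with hAdef
  set M : Matrix {j // j ∈ r} {j // j ∈ r} ℝ := Aᵀ * A with hMdef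
  set c : ℝ := t⁻¹ with hcdef
  set a : ℝ := (n:ℝ) * ν with hadef
  have hcpos : 0 < c := inv_pos.mpr ht
  have hapos : 0 < a := mul_pos hnpos hν
  set N : Matrix {j // j ∈ r} {j // j ∈ r} ℝ := M + c • 1 with hNdef
  set P : Matrix {j // j ∈ r} {j // j ∈ r} ℝ := M⁻¹ with hPdef
  set B : Matrix {j // j ∈ r} {j // j ∈ r} ℝ := N⁻¹ with hBdef
  set E : Matrix {j // j ∈ r} {j // j ∈ r} ℝ := M - a • 1 with hEdef
  -- transposes
  have hMt : Mᵀ = M := by rw [hMdef, transpose_mul, transpose_transpose]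
  have hNt : Nᵀ = N := by rw [hNdef, transpose_add, hMt, transpose_smul, transpose_one]
  have hEt : Eᵀ = E := by rw [hEdef, transpose_sub, hMt, transpose_smul, transpose_one]
  have hPt : Pᵀ = P := by rw [hPdef, transpose_nonsing_inv, hMt]
  have hBt : Bᵀ = B := by rw [hBdef, transpose_nonsing_inv, hNt]
  have hermOf : ∀ (U : Matrix {j // j ∈ r} {j // j ∈ r} ℝ), Uᵀ = U → U.IsHermitian := by
    intro U h
    show Uᴴ = U
    rwa [conjTranspose_eq_transpose_of_trivial]
  -- quadratic lower bound
  have hdq : ∀ v : {j // j ∈ r} → ℝ, 0 ≤ v ⬝ᵥ v := fun v => by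
    simpa using dotProduct_star_self_nonneg v
  have hquadM : ∀ v : {j // j ∈ r} → ℝ, a * (v ⬝ᵥ v) ≤ v ⬝ᵥ M *ᵥ v := by
    intro v
    have h := hmin v
    rw [smul_mulVec, dotProduct_smul, smul_eq_mul] at h
    have h2 : (n:ℝ) * (ν * (v ⬝ᵥ v)) ≤ (n:ℝ) * ((n:ℝ)⁻¹ * (v ⬝ᵥ M *ᵥ v)) :=
      mul_le_mul_of_nonneg_left h hnpos.le
    have h3 : (n:ℝ) * ((n:ℝ)⁻¹ * (v ⬝ᵥ M *ᵥ v)) = v ⬝ᵥ M *ᵥ v := by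
      field_simp
    rw [hadef]
    nlinarith [h2, h3]
  have hquadE : ∀ v : {j // j ∈ r} → ℝ, 0 ≤ v ⬝ᵥ E *ᵥ v := by
    intro v
    rw [hEdef, sub_mulVec, dotProduct_sub, smul_mulVec, one_mulVec, dotProduct_smul,
      smul_eq_mul]
    linarith [hquadM v]
  have hEpsd : E.PosSemidef := PosSemidef.of_dotProduct_mulVec_nonneg (hermOf E hEt) (fun v => by simpa using hquadE v)
  have hMposdef : M.PosDef := by
    refine PosDef.of_dotProduct_mulVec_pos (hermOf M hMt) fun v hv => ?_
    have h1 : 0 < v ⬝ᵥ v :=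
      lt_of_le_of_ne (hdq v) fun h => hv (dotProduct_self_eq_zero.mp h.symm)
    have := hquadM v
    simp only [star_trivial]
    nlinarith
  have hNposdef : N.PosDef := by
    refine PosDef.of_dotProduct_mulVec_pos (hermOf N hNt) fun v hv => ?_
    have h1 : 0 < v ⬝ᵥ v :=
      lt_of_le_of_ne (hdq v) fun h => hv (dotProduct_self_eq_zero.mp h.symm)
    have h2 := hquadM v
    simp only [star_trivial]
    rw [hNdef, add_mulVec, dotProduct_add, smul_mulVec, one_mulVec, dotProduct_smul,
      smul_eq_mul]
    nlinarith
  have hNdet : IsUnit N.det := (Matrix.isUnit_iff_isUnit_det N).mp hNposdef.isUnit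
  have hMP : M * P = 1 := mul_nonsing_inv M hrank
  have hPM : P * M = 1 := nonsing_inv_mul M hrank
  have hNB : N * B = 1 := mul_nonsing_inv N hNdet
  have hBN : B * N = 1 := nonsing_inv_mul N hNdet
  have hPM' : ∀ {m : Type} (Z : Matrix {j // j ∈ r} m ℝ), P * (M * Z) = Z := fun Z => by
    rw [← Matrix.mul_assoc, hPM, Matrix.one_mul]
  have hNB' : ∀ {m : Type} (Z : Matrix {j // j ∈ r} m ℝ), N * (B * Z) = Z := fun Z => by
    rw [← Matrix.mul_assoc, hNB, Matrix.one_mul]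
  have hBN' : ∀ {m : Type} (Z : Matrix {j // j ∈ r} m ℝ), B * (N * Z) = Z := fun Z => by
    rw [← Matrix.mul_assoc, hBN, Matrix.one_mul]
  have hMN : M * N = N * M := by
    rw [hNdef]; simp [mul_add, add_mul, mul_smul_comm, smul_mul_assoc]
  have hMN' : ∀ {m : Type} (Z : Matrix {j // j ∈ r} m ℝ), M * (N * Z) = N * (M * Z) :=
    fun Z => by rw [← Matrix.mul_assoc, ← Matrix.mul_assoc, hMN]
  have hPN : P * N = N * P := by
    rw [hNdef]; simp [mul_add, add_mul, mul_smul_comm, smul_mul_assoc, hMP, hPM]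
  have hBP : B * P = P * B := by
    have e1 : B * (P * N) * B = B * P := by rw [mul_assoc, mul_assoc, hNB, mul_one]
    have e2 : B * (N * P) * B = P * B := by rw [← mul_assoc, hBN, one_mul]
    rw [← e1, hPN, e2]
  have hD : P - B = c • (P * B) := by
    have h1 : P * N * B = P := by rw [mul_assoc, hNB, mul_one]
    have h2 : P * M * B = B := by rw [hPM, one_mul]
    calc P - B = P * N * B - P * M * B := by rw [h1, h2]
      _ = P * (N - M) * B := by rw [mul_sub, sub_mul]
      _ = P * (c • (1 : Matrix {j // j ∈ r} {j // j ∈ r} ℝ)) * B := by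
          rw [hNdef, add_sub_cancel_left]
      _ = c • (P * B) := by rw [mul_smul_comm, mul_one, smul_mul_assoc]
  have hNP : N * P = 1 + c • P := by
    rw [hNdef]; simp [add_mul, smul_mul_assoc, hMP]
  have hPBdec : P * B = B * B + c • (B * P * B) := by
    have e2 : B * (N * P) * B = P * B := by rw [← mul_assoc, hBN, one_mul]
    rw [← e2, hNP, mul_add, add_mul, mul_one, mul_smul_comm, smul_mul_assoc]
  set Q : Matrix {j // j ∈ r} {j // j ∈ r} ℝ :=
    E * E * E + (2*a+2*c) • (E * E) + (a*a+3*a*c+c*c) • E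
      + (a*c*(a+c)) • (1 : Matrix {j // j ∈ r} {j // j ∈ r} ℝ) with hQdef
  have hQ1 : Q = N * M * N - a • (M * N) := by
    rw [hQdef, hEdef, hNdef]
    simp only [mul_sub, sub_mul, mul_add, add_mul, smul_mul_assoc, mul_smul_comm, smul_smul,
      mul_one, one_mul, smul_sub, smul_add]
    module
  have hT1 : P * B * (N * M * N) * (B * P) = P := by
    simp only [mul_assoc]
    rw [hBN', hPM', hNB']
  have hT2 : P * B * (M * N) * (B * P) = B * P := by
    simp only [mul_assoc]
    rw [hMN', hBN', hPM']
  have hG : P * B * Q * (B * P) = P - a • (B * P) := by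
    rw [hQ1, mul_sub, sub_mul, mul_smul_comm, smul_mul_assoc, hT1, hT2]
  -- PSD facts
  have quadnn : ∀ (U : Matrix {j // j ∈ r} {j // j ∈ r} ℝ), U.PosSemidef →
      ∀ v, 0 ≤ v ⬝ᵥ U *ᵥ v := fun U hU v => by simpa using hU.dotProduct_mulVec_nonneg v
  have hPpsd : P.PosSemidef := hMposdef.inv.posSemidef
  have hBB : (B * B).PosSemidef := by
    have h := posSemidef_conjTranspose_mul_self B
    rwa [conjTranspose_eq_transpose_of_trivial, hBt] at h
  have hBPB : (B * P * B).PosSemidef := by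
    have h := hPpsd.conjTranspose_mul_mul_same B
    rwa [conjTranspose_eq_transpose_of_trivial, hBt] at h
  have hEEE : (E * E * E).PosSemidef := by
    have h := hEpsd.conjTranspose_mul_mul_same E
    rwa [conjTranspose_eq_transpose_of_trivial, hEt] at h
  have hEE : (E * E).PosSemidef := by
    have h := posSemidef_conjTranspose_mul_self E
    rwa [conjTranspose_eq_transpose_of_trivial, hEt] at h
  have hquadQ : ∀ v : {j // j ∈ r} → ℝ, 0 ≤ v ⬝ᵥ Q *ᵥ v := by
    intro v
    rw [hQdef]
    simp only [add_mulVec, dotProduct_add, smul_mulVec, dotProduct_smul, smul_eq_mul,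
      one_mulVec]
    have h1 := quadnn _ hEEE v
    have h2 := quadnn _ hEE v
    have h3 := hquadE v
    have h4 := hdq v
    have c1 : (0:ℝ) ≤ 2*a+2*c := by positivity
    have c2 : (0:ℝ) ≤ a*a+3*a*c+c*c := by positivity
    have c3 : (0:ℝ) ≤ a*c*(a+c) := by positivity
    have := add_nonneg (add_nonneg (add_nonneg h1 (mul_nonneg c1 h2)) (mul_nonneg c2 h3))
      (mul_nonneg c3 h4)
    linarith
  have hconjQ : ∀ v : {j // j ∈ r} → ℝ,
      v ⬝ᵥ (P * B * Q * (B * P)) *ᵥ v = ((B * P) *ᵥ v) ⬝ᵥ Q *ᵥ ((B * P) *ᵥ v) := by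
    intro v
    rw [show P * B * Q * (B * P) = (B * P)ᵀ * (Q * (B * P)) from by
      rw [mul_assoc, transpose_mul, hBt, hPt]]
    rw [← mulVec_mulVec, ← mulVec_mulVec, dotProduct_mulVec, vecMul_transpose]
  have hAconj : ∀ (D : Matrix {j // j ∈ r} {j // j ∈ r} ℝ) (v : Fin n → ℝ),
      v ⬝ᵥ (A * D * Aᵀ) *ᵥ v = (Aᵀ *ᵥ v) ⬝ᵥ D *ᵥ (Aᵀ *ᵥ v) := by
    intro D v
    rw [← mulVec_mulVec, ← mulVec_mulVec, dotProduct_mulVec, ← mulVec_transpose]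
  have hAA' : ∀ {m : Type} (Z : Matrix {j // j ∈ r} m ℝ), Aᵀ * (A * Z) = M * Z := fun Z => by
    rw [← Matrix.mul_assoc, ← hMdef]
  have hidem : (A * P * Aᵀ) * (A * P * Aᵀ) = A * P * Aᵀ := by
    simp only [Matrix.mul_assoc]
    rw [hAA', hPM']
  have hPhit : (A * P * Aᵀ)ᵀ = A * P * Aᵀ := by
    rw [transpose_mul, transpose_mul, transpose_transpose, hPt, Matrix.mul_assoc]
  have hprojPSD : ((1 : Matrix (Fin n) (Fin n) ℝ) - A * P * Aᵀ).PosSemidef := by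
    have h := posSemidef_conjTranspose_mul_self ((1 : Matrix (Fin n) (Fin n) ℝ) - A * P * Aᵀ)
    rw [conjTranspose_eq_transpose_of_trivial, transpose_sub, transpose_one, hPhit] at h
    have hmm : ((1 : Matrix (Fin n) (Fin n) ℝ) - A * P * Aᵀ) * (1 - A * P * Aᵀ)
        = 1 - A * P * Aᵀ := by
      rw [mul_sub, sub_mul, sub_mul, hidem]
      simp only [Matrix.mul_one, Matrix.one_mul]
      abel
    rwa [hmm] at h
  set w : {j // j ∈ r} → ℝ := Aᵀ *ᵥ y with hwdef
  have hkey : y ⬝ᵥ ((1 : Matrix (Fin n) (Fin n) ℝ) - A * B * Aᵀ) *ᵥ y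
      - y ⬝ᵥ ((1 : Matrix (Fin n) (Fin n) ℝ) - A * P * Aᵀ) *ᵥ y
      = c * (w ⬝ᵥ (P * B) *ᵥ w) := by
    rw [sub_mulVec, sub_mulVec, dotProduct_sub, dotProduct_sub, one_mulVec, hAconj, hAconj]
    have h2 : w ⬝ᵥ (P - B) *ᵥ w = c * (w ⬝ᵥ (P * B) *ᵥ w) := by
      rw [hD, smul_mulVec, dotProduct_smul, smul_eq_mul]
    have h3 : w ⬝ᵥ (P - B) *ᵥ w = w ⬝ᵥ P *ᵥ w - w ⬝ᵥ B *ᵥ w := by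
      rw [sub_mulVec, dotProduct_sub]
    linarith
  have hs0 : 0 ≤ w ⬝ᵥ (P * B) *ᵥ w := by
    rw [hPBdec, add_mulVec, dotProduct_add, smul_mulVec, dotProduct_smul, smul_eq_mul]
    exact add_nonneg (quadnn _ hBB w) (mul_nonneg hcpos.le (quadnn _ hBPB w))
  have hgap : a * (w ⬝ᵥ (P * B) *ᵥ w) ≤ w ⬝ᵥ P *ᵥ w := by
    have h0 : 0 ≤ w ⬝ᵥ (P * B * Q * (B * P)) *ᵥ w := by
      rw [hconjQ]; exact hquadQ _
    rw [hG, sub_mulVec, dotProduct_sub, smul_mulVec, dotProduct_smul, smul_eq_mul,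
      hBP] at h0
    linarith
  have hproj_le : w ⬝ᵥ P *ᵥ w ≤ y ⬝ᵥ y := by
    have h0 : 0 ≤ y ⬝ᵥ ((1 : Matrix (Fin n) (Fin n) ℝ) - A * P * Aᵀ) *ᵥ y := by
      simpa using hprojPSD.dotProduct_mulVec_nonneg y
    rw [sub_mulVec, dotProduct_sub, one_mulVec, hAconj] at h0
    linarith
  rw [hkey]
  constructor
  · exact mul_nonneg hcpos.le hs0
  · rw [le_div_iff₀ (mul_pos hapos ht)]
    have hct : c * t = 1 := inv_mul_cancel₀ ht.ne'
    calc c * (w ⬝ᵥ (P * B) *ᵥ w) * (a * t)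
        = (c * t) * (a * (w ⬝ᵥ (P * B) *ᵥ w)) := by ring
      _ = a * (w ⬝ᵥ (P * B) *ᵥ w) := by rw [hct, one_mul]
      _ ≤ w ⬝ᵥ P *ᵥ w := hgap
      _ ≤ y ⬝ᵥ y := hproj_le
end
end

section
/- Let r₁ ⊊ r₂ be index sets with |r₂| ≤ L, and suppose X_{r₂} has full column rank with λ_min(n^{-1} X_{r₂}^T X_{r₂}) ≥ ν for some ν > 0. Then λ_min( X_{r₂ \ r₁}^T (I_n − Φ_{r₁}) X_{r₂ \ r₁} ) ≥ n ν. -/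
open Matrix

noncomputable section

/-- Splitting a sum over `r₂` into the parts over `r₂ \ r₁` and `r₁`. -/
lemma stmt8_sum_split {p : ℕ} {r₁ r₂ : Finset (Fin p)} (h : r₁ ⊆ r₂) (F : Fin p → ℝ) :
    ∑ j : {j // j ∈ r₂}, F j.1 =
      (∑ j : {j // j ∈ r₂ \ r₁}, F j.1) + ∑ j : {j // j ∈ r₁}, F j.1 := by
  simp only [Finset.univ_eq_attach, Finset.sum_attach]
  exact (Finset.sum_sdiff h).symm

/-- Quadratic form of a Gram matrix is a squared norm. -/
lemma stmt8_quad_self {n : ℕ} {κ : Type*} [Fintype κ] (M : Matrix (Fin n) κ ℝ)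
    (x : κ → ℝ) : x ⬝ᵥ (Mᵀ * M) *ᵥ x = (M *ᵥ x) ⬝ᵥ (M *ᵥ x) := by
  rw [← mulVec_mulVec, dotProduct_mulVec, vecMul_transpose]

/-- Let `r₁ ⊊ r₂` with `|r₂| ≤ L`, and suppose `X_{r₂}` has full column rank
with `λ_min(n⁻¹ X_{r₂}ᵀ X_{r₂}) ≥ ν > 0` (stated via the quadratic form).  Then
`λ_min(X_{r₂∖r₁}ᵀ (Iₙ − Φ_{r₁}) X_{r₂∖r₁}) ≥ n ν` (again via the quadratic form). -/
theorem stmt_8 {n p : ℕ} (X : Matrix (Fin n) (Fin p) ℝ) (L : ℕ)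
    (r₁ r₂ : Finset (Fin p)) (h12 : r₁ ⊂ r₂) (hL : r₂.card ≤ L)
    (hrank : IsUnit ((subcols X r₂)ᵀ * subcols X r₂).det)
    (ν : ℝ) (hν : 0 < ν)
    (hmin : ∀ v : {j // j ∈ r₂} → ℝ,
      ν * (v ⬝ᵥ v) ≤ v ⬝ᵥ ((((n : ℝ)⁻¹) • ((subcols X r₂)ᵀ * subcols X r₂)).mulVec v)) :
    ∀ v : {j // j ∈ r₂ \ r₁} → ℝ,
      (n : ℝ) * ν * (v ⬝ᵥ v) ≤
        v ⬝ᵥ (((subcols X (r₂ \ r₁))ᵀ *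
          ((1 : Matrix (Fin n) (Fin n) ℝ) - proj X r₁) *
            subcols X (r₂ \ r₁)).mulVec v) := by
  classical
  intro v
  set A := subcols X (r₂ \ r₁) with hA
  set B := subcols X r₁ with hB
  set C := subcols X r₂ with hC
  set G₁ := Bᵀ * B with hG₁
  set G₂ := Cᵀ * C with hG₂
  have hsub : r₁ ⊆ r₂ := h12.1
  have hne : Nonempty {j // j ∈ r₂} := by
    obtain ⟨j, hj2, _⟩ := Finset.exists_of_ssubset h12
    exact ⟨⟨j, hj2⟩⟩
  -- `n` must be positive
  have hn : 0 < n := by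
    rcases Nat.eq_zero_or_pos n with h0 | h
    · exfalso
      have hzero : G₂ = 0 := by
        subst h0
        ext i j
        simp [hG₂, hC, subcols, Matrix.mul_apply]
      rw [hzero, Matrix.det_zero] at hrank
      exact hrank.ne_zero rfl
    · exact h
  have hn' : (0 : ℝ) < n := by exact_mod_cast hn
  -- restated minimal-eigenvalue hypothesis
  have hmin' : ∀ u : {j // j ∈ r₂} → ℝ, (n : ℝ) * ν * (u ⬝ᵥ u) ≤ u ⬝ᵥ G₂ *ᵥ u := by
    intro u
    have h1 := hmin u
    rw [smul_mulVec, dotProduct_smul, smul_eq_mul] at h1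
    calc (n : ℝ) * ν * (u ⬝ᵥ u) = (n : ℝ) * (ν * (u ⬝ᵥ u)) := by ring
      _ ≤ (n : ℝ) * ((n : ℝ)⁻¹ * (u ⬝ᵥ G₂ *ᵥ u)) := mul_le_mul_of_nonneg_left h1 hn'.le
      _ = u ⬝ᵥ G₂ *ᵥ u := by field_simp
  -- extension of vectors on `r₂ \ r₁` and `r₁` to vectors on `r₂`
  have key : ∀ (v' : {j // j ∈ r₂ \ r₁} → ℝ) (w : {j // j ∈ r₁} → ℝ),
      ∃ u : {j // j ∈ r₂} → ℝ,
        C *ᵥ u = A *ᵥ v' + B *ᵥ w ∧ u ⬝ᵥ u = v' ⬝ᵥ v' + w ⬝ᵥ w := by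
    intro v' w
    set U : Fin p → ℝ := fun j =>
      if h : j ∈ r₂ \ r₁ then v' ⟨j, h⟩ else if h : j ∈ r₁ then w ⟨j, h⟩ else 0 with hU
    have hU1 : ∀ j : {j // j ∈ r₂ \ r₁}, U j.1 = v' j := by
      intro j; exact dif_pos j.2
    have hU2 : ∀ j : {j // j ∈ r₁}, U j.1 = w j := by
      intro j
      have hnot : j.1 ∉ r₂ \ r₁ := fun h => (Finset.mem_sdiff.mp h).2 j.2
      calc U j.1 = if h : j.1 ∈ r₁ then w ⟨j.1, h⟩ else 0 := dif_neg hnot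
        _ = w j := dif_pos j.2
    refine ⟨fun j => U j.1, ?_, ?_⟩
    · funext i
      have h1 : (C *ᵥ fun j => U j.1) i = ∑ j : {j // j ∈ r₂}, X i j.1 * U j.1 := by
        simp [Matrix.mulVec, dotProduct, hC, subcols]
      rw [h1, stmt8_sum_split hsub (fun t => X i t * U t)]
      have h2 : (A *ᵥ v') i = ∑ j : {j // j ∈ r₂ \ r₁}, X i j.1 * U j.1 := by
        simp only [Matrix.mulVec, dotProduct, hA, subcols, Matrix.of_apply]
        exact Finset.sum_congr rfl fun j _ => by rw [hU1]
      have h3 : (B *ᵥ w) i = ∑ j : {j // j ∈ r₁}, X i j.1 * U j.1 := by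
        simp only [Matrix.mulVec, dotProduct, hB, subcols, Matrix.of_apply]
        exact Finset.sum_congr rfl fun j _ => by rw [hU2]
      simp [h2, h3]
    · show ∑ j : {j // j ∈ r₂}, U j.1 * U j.1 = _
      rw [stmt8_sum_split hsub (fun t => U t * U t)]
      congr 1
      · exact Finset.sum_congr rfl fun j _ => by rw [hU1]
      · exact Finset.sum_congr rfl fun j _ => by rw [hU2]
  -- `G₁` is positive definite, hence invertible
  have hG₁det : IsUnit G₁.det := by
    have hpd : G₁.PosDef := by
      refine Matrix.posDef_iff_dotProduct_mulVec.mpr ⟨?_, ?_⟩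
      · have := Matrix.isHermitian_conjTranspose_mul_self B
        rwa [Matrix.conjTranspose_eq_transpose_of_trivial] at this
      · intro x hx
        obtain ⟨u, hu1, hu2⟩ := key 0 x
        have hquad : x ⬝ᵥ G₁ *ᵥ x = u ⬝ᵥ G₂ *ᵥ u := by
          rw [hG₁, hG₂, stmt8_quad_self, stmt8_quad_self, hu1]
          simp
        have hxx : 0 < x ⬝ᵥ x := by
          have h0 : (0 : ℝ) ≤ x ⬝ᵥ x := Finset.sum_nonneg fun i _ => mul_self_nonneg _
          rcases h0.lt_or_eq with h | h
          · exact h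
          · exact absurd (dotProduct_self_eq_zero.mp h.symm) hx
        have : (0 : ℝ) < (n : ℝ) * ν * (u ⬝ᵥ u) := by
          rw [hu2]
          simp only [dotProduct, Pi.zero_apply, mul_zero, Finset.sum_const_zero, zero_add]
          positivity
        have hle := hmin' u
        show 0 < star x ⬝ᵥ G₁ *ᵥ x
        rw [show star x = x from rfl, hquad]
        linarith
    exact isUnit_iff_ne_zero.mpr hpd.det_pos.ne'
  -- the residual vector
  set y := A *ᵥ v with hy
  set w := G₁⁻¹ *ᵥ (Bᵀ *ᵥ y) with hw
  set z := y - B *ᵥ w with hz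
  clear_value z
  clear_value w
  clear_value y
  have hPz : proj X r₁ *ᵥ y = B *ᵥ w := by
    show (subcols X r₁ * ((subcols X r₁)ᵀ * subcols X r₁)⁻¹ * (subcols X r₁)ᵀ) *ᵥ y = _
    rw [← hB, ← hG₁, ← mulVec_mulVec, ← mulVec_mulVec, hw]
  have hBz : Bᵀ *ᵥ z = 0 := by
    have h1 : Bᵀ *ᵥ (B *ᵥ w) = Bᵀ *ᵥ y := by
      rw [mulVec_mulVec, ← hG₁, hw, mulVec_mulVec, Matrix.mul_nonsing_inv _ hG₁det,
        one_mulVec]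
    rw [hz, mulVec_sub, h1, sub_self]
  have h1P : ((1 : Matrix (Fin n) (Fin n) ℝ) - proj X r₁) *ᵥ y = z := by
    rw [sub_mulVec, one_mulVec, hPz, hz]
  have hyz : v ⬝ᵥ (Aᵀ * ((1 : Matrix (Fin n) (Fin n) ℝ) - proj X r₁) * A) *ᵥ v
      = y ⬝ᵥ (((1 : Matrix (Fin n) (Fin n) ℝ) - proj X r₁) *ᵥ y) := by
    rw [Matrix.mul_assoc, ← mulVec_mulVec, dotProduct_mulVec, vecMul_transpose, ← hy,
      ← mulVec_mulVec, ← hy]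
  have hByz : y ⬝ᵥ z = z ⬝ᵥ z := by
    have hy' : y = z + B *ᵥ w := by rw [hz, sub_add_cancel]
    have h0 : (B *ᵥ w) ⬝ᵥ z = 0 := by
      rw [dotProduct_comm, dotProduct_mulVec, ← mulVec_transpose, hBz, zero_dotProduct]
    rw [hy', add_dotProduct, h0, add_zero]
  obtain ⟨u, hu1, hu2⟩ := key v (-w)
  have hzu : z = C *ᵥ u := by
    rw [hu1, hz, hy, mulVec_neg, sub_eq_add_neg]
  have hfinal : z ⬝ᵥ z = u ⬝ᵥ G₂ *ᵥ u := by
    rw [hzu, hG₂, stmt8_quad_self]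
  calc (n : ℝ) * ν * (v ⬝ᵥ v)
      ≤ (n : ℝ) * ν * (u ⬝ᵥ u) := by
        rw [hu2]
        have h1 : (0 : ℝ) ≤ (-w) ⬝ᵥ (-w) := Finset.sum_nonneg fun i _ => mul_self_nonneg _
        have h2 : (0 : ℝ) ≤ (n : ℝ) * ν := by positivity
        nlinarith
    _ ≤ u ⬝ᵥ G₂ *ᵥ u := hmin' u
    _ = z ⬝ᵥ z := hfinal.symm
    _ = y ⬝ᵥ z := hByz.symm
    _ = v ⬝ᵥ (Aᵀ * ((1 : Matrix (Fin n) (Fin n) ℝ) - proj X r₁) * A) *ᵥ v := by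
        rw [hyz, h1P]
end
end

section
/- Let r ⊆ {1,…,p} be an index set and k ∉ r a column index such that the augmented matrix X_{r ∪ {k}} = [X_r, X_k] has full column rank. Then Φ_{r ∪ {k}} − Φ_r = (I_n − Φ_r) X_k X_k^T (I_n − Φ_r) / ( X_k^T (I_n − Φ_r) X_k ). -/
open Matrix

noncomputable section

/-- Uniqueness of symmetric projections fixing the columns of `M` and factoring through `M`. -/
lemma proj_unique {ι κ : Type*} [Fintype ι] [Fintype κ]
    (P Q : Matrix ι ι ℝ) (M : Matrix ι κ ℝ) (B C : Matrix κ ι ℝ)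
    (hPs : Pᵀ = P) (hQs : Qᵀ = Q) (hPM : P * M = M) (hQM : Q * M = M)
    (hPB : P = M * B) (hQC : Q = M * C) : P = Q := by
  have h1 : Q * P = P := by rw [hPB, ← Matrix.mul_assoc, hQM]
  have h2 : P * Q = Q := by rw [hQC, ← Matrix.mul_assoc, hPM]
  have h3 : Q * P = Q := by
    have : (P * Q)ᵀ = Q * P := by rw [Matrix.transpose_mul, hPs, hQs]
    rw [h2, hQs] at this
    exact this.symm
  rw [← h1, h3]

lemma mul_vecMulVec {ι κ μ : Type*} [Fintype κ]
    (M : Matrix ι κ ℝ) (u : κ → ℝ) (v : μ → ℝ) :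
    M * Matrix.vecMulVec u v = Matrix.vecMulVec (M.mulVec u) v := by
  ext i j
  simp [Matrix.mul_apply, Matrix.vecMulVec_apply, Matrix.mulVec, dotProduct,
    Finset.sum_mul, mul_assoc]

lemma vecMulVec_mul {ι κ μ : Type*} [Fintype κ]
    (u : ι → ℝ) (v : κ → ℝ) (M : Matrix κ μ ℝ) :
    Matrix.vecMulVec u v * M = Matrix.vecMulVec u (Matrix.vecMul v M) := by
  ext i j
  simp [Matrix.mul_apply, Matrix.vecMulVec_apply, Matrix.vecMul, dotProduct,
    Finset.mul_sum, mul_assoc]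

lemma vecMulVec_mulVec' {ι κ : Type*} [Fintype κ]
    (u : ι → ℝ) (v : κ → ℝ) (w : κ → ℝ) :
    (Matrix.vecMulVec u v).mulVec w = (v ⬝ᵥ w) • u := by
  ext i
  simp only [Matrix.vecMulVec_apply, Matrix.mulVec, dotProduct, Pi.smul_apply,
    smul_eq_mul, Finset.sum_mul, of_apply]
  exact Finset.sum_congr rfl fun x _ => by ring

lemma vecMulVec_transpose' {ι κ : Type*} (u : ι → ℝ) (v : κ → ℝ) :
    (Matrix.vecMulVec u v)ᵀ = Matrix.vecMulVec v u := by
  ext i j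
  simp [Matrix.vecMulVec_apply, mul_comm]

lemma mulVec_dotProduct' {ι κ : Type*} [Fintype ι] [Fintype κ]
    (N : Matrix ι κ ℝ) (u : κ → ℝ) (w : ι → ℝ) :
    N.mulVec u ⬝ᵥ w = u ⬝ᵥ Nᵀ.mulVec w := by
  rw [dotProduct_mulVec, Matrix.vecMul_transpose, dotProduct_comm]

/-- For `k ∉ r` with `X_{r ∪ {k}}` of full column rank,
`Φ_{r∪{k}} − Φ_r = (Iₙ − Φ_r) X_k X_kᵀ (Iₙ − Φ_r) / (X_kᵀ (Iₙ − Φ_r) X_k)`. -/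
theorem stmt_10 {n p : ℕ} (X : Matrix (Fin n) (Fin p) ℝ) (r : Finset (Fin p)) (k : Fin p)
    (hk : k ∉ r)
    (hrank : IsUnit ((subcols X (insert k r))ᵀ * subcols X (insert k r)).det) :
    proj X (insert k r) - proj X r =
      ((fun i => X i k) ⬝ᵥ
          (((1 : Matrix (Fin n) (Fin n) ℝ) - proj X r).mulVec fun i => X i k))⁻¹ •
        (((1 : Matrix (Fin n) (Fin n) ℝ) - proj X r) *
          Matrix.vecMulVec (fun i => X i k) (fun i => X i k) *
          ((1 : Matrix (Fin n) (Fin n) ℝ) - proj X r)) := by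
  classical
  set A := subcols X r with hA
  set M := subcols X (insert k r) with hM
  set a : Fin n → ℝ := fun i => X i k with ha
  -- the inclusion matrix and indicator vector
  set E : Matrix {j // j ∈ insert k r} {j // j ∈ r} ℝ :=
    Matrix.of (fun j' j => if j'.1 = j.1 then (1 : ℝ) else 0) with hE
  set δ : {j // j ∈ insert k r} → ℝ := fun j' => if j'.1 = k then 1 else 0 with hδ
  set inc : {j // j ∈ r} → {j // j ∈ insert k r} :=
    fun j => ⟨j.1, Finset.mem_insert_of_mem j.2⟩ with hinc
  -- F1 : M * E = A
  have hME : M * E = A := by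
    ext i j
    rw [Matrix.mul_apply]
    rw [Finset.sum_eq_single (inc j)]
    · simp [hM, hA, hE, hinc, subcols]
    · intro b _ hb
      have : ¬ b.1 = j.1 := by
        intro h; exact hb (Subtype.ext h)
      simp [hE, this]
    · intro h; exact absurd (Finset.mem_univ _) h
  -- F2 : M.mulVec δ = a
  have hMδ : M.mulVec δ = a := by
    ext i
    rw [Matrix.mulVec, dotProduct]
    rw [Finset.sum_eq_single (⟨k, Finset.mem_insert_self k r⟩ : {j // j ∈ insert k r})]
    · simp [hM, hδ, ha, subcols]
    · intro b _ hb
      have : ¬ b.1 = k := by intro h; exact hb (Subtype.ext h)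
      simp [hδ, this]
    · intro h; exact absurd (Finset.mem_univ _) h
  -- F4 : injectivity of M.mulVec
  have hMinj : ∀ z : {j // j ∈ insert k r} → ℝ, M.mulVec z = 0 → z = 0 := by
    intro z hz
    have h1 : (Mᵀ * M).mulVec z = 0 := by
      rw [← Matrix.mulVec_mulVec, hz, Matrix.mulVec_zero]
    have h2 : ((Mᵀ * M)⁻¹ * (Mᵀ * M)).mulVec z = 0 := by
      rw [← Matrix.mulVec_mulVec, h1, Matrix.mulVec_zero]
    rwa [Matrix.nonsing_inv_mul _ hrank, Matrix.one_mulVec] at h2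
  -- F5 : the Gram matrix of A is invertible
  have hG : IsUnit (Aᵀ * A).det := by
    by_contra hGn
    have hdet : (Aᵀ * A).det = 0 := by
      by_contra h; exact hGn (isUnit_iff_ne_zero.mpr h)
    obtain ⟨z, hz0, hz⟩ := (Matrix.exists_mulVec_eq_zero_iff).mpr hdet
    have hAz : A.mulVec z = 0 := by
      have : A.mulVec z ⬝ᵥ A.mulVec z = 0 := by
        rw [mulVec_dotProduct', Matrix.mulVec_mulVec, hz]
        simp
      exact dotProduct_self_eq_zero.mp this
    have hEz : M.mulVec (E.mulVec z) = 0 := by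
      rw [Matrix.mulVec_mulVec, hME, hAz]
    have hEz0 : E.mulVec z = 0 := hMinj _ hEz
    apply hz0
    ext j
    have : (E.mulVec z) (inc j) = z j := by
      rw [Matrix.mulVec, dotProduct]
      rw [Finset.sum_eq_single j]
      · simp [hE, hinc]
      · intro b _ hb
        have : ¬ (inc j).1 = b.1 := by
          intro h; exact hb (Subtype.ext h.symm)
        simp [hE, this]
      · intro h; exact absurd (Finset.mem_univ _) h
    rw [hEz0] at this
    simpa using this.symm
  set Φ := proj X r with hΦ
  have hΦdef : Φ = A * (Aᵀ * A)⁻¹ * Aᵀ := rfl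
  -- F6 : Φ * A = A
  have hΦA : Φ * A = A := by
    rw [hΦdef]
    simp only [Matrix.mul_assoc]
    rw [Matrix.nonsing_inv_mul _ hG, Matrix.mul_one]
  -- F7 : Φᵀ = Φ
  have hΦt : Φᵀ = Φ := by
    rw [hΦdef, Matrix.transpose_mul, Matrix.transpose_mul, Matrix.transpose_nonsing_inv,
      Matrix.transpose_mul, Matrix.transpose_transpose, Matrix.mul_assoc]
  have hIt : ((1 : Matrix (Fin n) (Fin n) ℝ) - Φ)ᵀ = 1 - Φ := by
    rw [Matrix.transpose_sub, Matrix.transpose_one, hΦt]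
  -- F8 : idempotence
  have hΦi : Φ * Φ = Φ := by
    conv_lhs => rw [hΦdef]
    simp only [Matrix.mul_assoc]
    rw [← Matrix.mul_assoc Aᵀ A, ← Matrix.mul_assoc ((Aᵀ * A)⁻¹),
      Matrix.nonsing_inv_mul _ hG, Matrix.one_mul, hΦdef, Matrix.mul_assoc]
  have hIi : ((1 : Matrix (Fin n) (Fin n) ℝ) - Φ) * (1 - Φ) = 1 - Φ := by
    rw [Matrix.sub_mul, Matrix.one_mul, Matrix.mul_sub, Matrix.mul_one, hΦi]
    abel
  set v : Fin n → ℝ := ((1 : Matrix (Fin n) (Fin n) ℝ) - Φ).mulVec a with hv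
  set c : ℝ := a ⬝ᵥ v with hc
  -- F10 : c = ‖v‖²
  have hcv : c = v ⬝ᵥ v := by
    rw [hc, hv]
    rw [mulVec_dotProduct', hIt, Matrix.mulVec_mulVec, hIi]
  set w : {j // j ∈ r} → ℝ := ((Aᵀ * A)⁻¹ * Aᵀ).mulVec a with hw
  have hΦa : Φ.mulVec a = A.mulVec w := by
    rw [hΦdef, Matrix.mul_assoc, ← Matrix.mulVec_mulVec, hw]
  have hveq : v = a - Φ.mulVec a := by
    rw [hv, Matrix.sub_mulVec, Matrix.one_mulVec]
  -- F11 : c ≠ 0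
  have hc0 : c ≠ 0 := by
    intro hczero
    have hvv : v ⬝ᵥ v = 0 := by rw [← hcv]; exact hczero
    have hv0 : v = 0 := dotProduct_self_eq_zero.mp hvv
    have h2 : a - Φ.mulVec a = 0 := by rw [← hveq]; exact hv0
    rw [sub_eq_zero] at h2
    have haw : a = A.mulVec w := by rw [h2, hΦa]
    have hMz : M.mulVec (δ - E.mulVec w) = 0 := by
      rw [Matrix.mulVec_sub, hMδ, Matrix.mulVec_mulVec, hME, ← haw, sub_self]
    have hz0 := hMinj _ hMz
    have h1 : δ (⟨k, Finset.mem_insert_self k r⟩ : {j // j ∈ insert k r}) -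
        (E.mulVec w) ⟨k, Finset.mem_insert_self k r⟩ = 0 := by
      have := congrFun hz0 ⟨k, Finset.mem_insert_self k r⟩
      exact this
    have hδk : δ (⟨k, Finset.mem_insert_self k r⟩ : {j // j ∈ insert k r}) = 1 := by
      simp [hδ]
    have hEk : (E.mulVec w) (⟨k, Finset.mem_insert_self k r⟩ : {j // j ∈ insert k r}) = 0 := by
      rw [Matrix.mulVec, dotProduct]
      apply Finset.sum_eq_zero
      intro j _
      have : ¬ (k = j.1) := by
        intro h; exact hk (h ▸ j.2)
      simp [hE, this]
    rw [hδk, hEk, sub_zero] at h1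
    exact one_ne_zero h1
  -- the candidate matrix
  set S : Matrix (Fin n) (Fin n) ℝ :=
    ((1 : Matrix (Fin n) (Fin n) ℝ) - Φ) * Matrix.vecMulVec a a * (1 - Φ) with hS
  set Q : Matrix (Fin n) (Fin n) ℝ := Φ + c⁻¹ • S with hQ
  -- F12 : S = vecMulVec v v
  have hSv : S = Matrix.vecMulVec v v := by
    rw [hS, _root_.mul_vecMulVec, ← hv, _root_.vecMulVec_mul]
    rw [← Matrix.mulVec_transpose, hIt, ← hv]
  -- F14 : symmetry of Q
  have hQs : Qᵀ = Q := by
    rw [hQ, Matrix.transpose_add, Matrix.transpose_smul, hΦt, hSv, vecMulVec_transpose']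
  -- columns of M are fixed by Q
  have hQA : Q * A = A := by
    have hIA : ((1 : Matrix (Fin n) (Fin n) ℝ) - Φ) * A = 0 := by
      rw [Matrix.sub_mul, Matrix.one_mul, hΦA, sub_self]
    rw [hQ, Matrix.add_mul, hΦA, Matrix.smul_mul, hS, Matrix.mul_assoc, hIA,
      Matrix.mul_zero, smul_zero, add_zero]
  have hQa : Q.mulVec a = a := by
    rw [hQ, Matrix.add_mulVec, Matrix.smul_mulVec, hSv, vecMulVec_mulVec']
    rw [dotProduct_comm v a, ← hc, smul_smul, inv_mul_cancel₀ hc0, one_smul, hveq]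
    abel
  have hQM : Q * M = M := by
    ext i j'
    rw [Matrix.mul_apply]
    rcases Finset.mem_insert.mp j'.2 with h | h
    · have hcol : (fun l => M l j') = a := by
        ext l; simp [hM, subcols, h, ha]
      calc ∑ l, Q i l * M l j' = Q.mulVec a i := by
            rw [Matrix.mulVec, dotProduct, ← hcol]
        _ = a i := by rw [hQa]
        _ = M i j' := by simp [hM, subcols, h, ha]
    · have hcol : ∀ l, M l j' = A l ⟨j'.1, h⟩ := by
        intro l; simp [hM, hA, subcols]
      calc ∑ l, Q i l * M l j' = (Q * A) i ⟨j'.1, h⟩ := by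
            rw [Matrix.mul_apply]; exact Finset.sum_congr rfl fun l _ => by rw [hcol]
        _ = A i ⟨j'.1, h⟩ := by rw [hQA]
        _ = M i j' := (hcol i).symm
  -- F15 : Q factors through M
  set u : {j // j ∈ insert k r} → ℝ := δ - E.mulVec w with hu
  have hMu : M.mulVec u = v := by
    rw [hu, Matrix.mulVec_sub, hMδ, Matrix.mulVec_mulVec, hME, ← hΦa, ← hveq]
  set B : Matrix {j // j ∈ insert k r} (Fin n) ℝ :=
    E * ((Aᵀ * A)⁻¹ * Aᵀ) + c⁻¹ • Matrix.vecMulVec u v with hB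
  have hQfac : Q = M * B := by
    rw [hB, Matrix.mul_add, Matrix.mul_smul, _root_.mul_vecMulVec, hMu, ← Matrix.mul_assoc, hME,
      ← Matrix.mul_assoc, ← hΦdef, ← hSv, ← hQ]
  -- facts about P
  set P := proj X (insert k r) with hP
  have hPdef : P = M * (Mᵀ * M)⁻¹ * Mᵀ := rfl
  have hPM : P * M = M := by
    rw [hPdef]
    simp only [Matrix.mul_assoc]
    rw [Matrix.nonsing_inv_mul _ hrank, Matrix.mul_one]
  have hPs : Pᵀ = P := by
    rw [hPdef, Matrix.transpose_mul, Matrix.transpose_mul, Matrix.transpose_nonsing_inv,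
      Matrix.transpose_mul, Matrix.transpose_transpose, Matrix.mul_assoc]
  have hPfac : P = M * ((Mᵀ * M)⁻¹ * Mᵀ) := by rw [hPdef, Matrix.mul_assoc]
  -- conclude
  have hPQ : P = Q := proj_unique P Q M _ _ hPs hQs hPM hQM hPfac hQfac
  rw [hPQ, hQ]
  abel
end
end

section
/- Let K ≥ 1 and let ω₀ = 0 and ω₁,…,ω_K > 0 satisfy ω_K/K < ω_{K−1}/(K−1) < ⋯ < ω₂/2 < ω₁. Let p ≥ 1 and for each j ∈ {1,…,p} let M_j, M_j^* ⊆ {1,…,K} be subsets; put M̃_j = M_j ∪ M_j^*, m_j = |M_j|, m̃_j = |M̃_j|, m_j^* = |M_j^*|. Then Σ_{j=1}^p ( ω_{m̃_j} − ω_{m_j} ) ≤ Σ_{j : M_j^* ≠ ∅} |M_j^* \ M_j| · ω_{m_j^*} / m_j^*. Equivalently, with l_k = #{j : m_j = k} and l̃_k = #{j : m̃_j = k}, Σ_{k=1}^K ω_k (l̃_k − l_k) ≤ Σ_{j : M_j^* ≠ ∅} |M_j^* \ M_j| · ω_{m_j^*} / m_j^*. -/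
open Finset

lemma stmt12_ratio_anti (K : ℕ) (ω : ℕ → ℝ)
    (hchain : ∀ k : ℕ, 2 ≤ k → k ≤ K → ω k / k < ω (k - 1) / ((k : ℝ) - 1)) :
    ∀ a b : ℕ, 1 ≤ a → a ≤ b → b ≤ K → ω b / b ≤ ω a / a := by
  intro a b ha hab hbK
  induction b, hab using Nat.le_induction with
  | base => exact le_refl _
  | succ b hb ih =>
    have h2 : 2 ≤ b + 1 := by omega
    have h := hchain (b + 1) h2 hbK
    have hb1 : (b + 1 - 1) = b := by omega
    rw [hb1] at h
    have h' : ω (b + 1) / ((b : ℝ) + 1) < ω b / b := by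
      push_cast at h
      have e : ((b : ℝ) + 1 - 1) = (b : ℝ) := by ring
      rw [e] at h
      exact h
    have hbK' : b ≤ K := by omega
    calc ω (b+1) / ((b+1 : ℕ) : ℝ) = ω (b+1) / ((b:ℝ)+1) := by push_cast; ring_nf
      _ ≤ ω b / b := le_of_lt h'
      _ ≤ ω a / a := ih hbK'

lemma stmt12_fiber_sum (K p : ℕ) (ω : ℕ → ℝ) (hω0 : ω 0 = 0) (f : Fin p → ℕ)
    (hf : ∀ j, f j ≤ K) :
    ∑ k ∈ Finset.Icc 1 K, ω k * ((Finset.univ.filter fun j : Fin p => f j = k).card : ℝ)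
      = ∑ j : Fin p, ω (f j) := by
  have hmaps : ∀ j ∈ (Finset.univ : Finset (Fin p)), f j ∈ Finset.Icc 0 K := by
    intro j _; simp [hf j]
  rw [← Finset.sum_fiberwise_of_maps_to hmaps (fun j => ω (f j))]
  have h0 : Finset.Icc 0 K = insert 0 (Finset.Icc 1 K) := by
    ext x; simp [Nat.le_iff_lt_or_eq]; omega
  rw [h0, Finset.sum_insert (by simp)]
  have hz : ∑ j ∈ Finset.univ.filter (fun j : Fin p => f j = 0), ω (f j) = 0 := by
    apply Finset.sum_eq_zero
    intro j hj
    rw [Finset.mem_filter] at hj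
    rw [hj.2]
    exact hω0
  rw [hz, zero_add]
  apply Finset.sum_congr rfl
  intro k _
  rw [mul_comm, ← nsmul_eq_mul, ← Finset.sum_const]
  apply Finset.sum_congr rfl
  intro j hj
  rw [Finset.mem_filter] at hj
  rw [hj.2]

/-- Let `K ≥ 1`, `ω 0 = 0`, `ω 1, …, ω K > 0` with
`ω K / K < ω (K-1)/(K-1) < ⋯ < ω 2 / 2 < ω 1`.  For subsets `M j, M* j ⊆ {1,…,K}`
(`j = 1,…,p`), putting `M̃ j = M j ∪ M* j`,
`Σ_j (ω |M̃ j| − ω |M j|) ≤ Σ_{j : M* j ≠ ∅} |M* j \ M j| · ω |M* j| / |M* j|`;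
equivalently, with `l k = #{j : |M j| = k}` and `l̃ k = #{j : |M̃ j| = k}`,
`Σ_{k=1}^K ω k (l̃ k − l k) ≤ Σ_{j : M* j ≠ ∅} |M* j \ M j| · ω |M* j| / |M* j|`. -/
theorem stmt_12 (K p : ℕ) (hK : 1 ≤ K) (hp : 1 ≤ p) (ω : ℕ → ℝ) (hω0 : ω 0 = 0)
    (hωpos : ∀ k : ℕ, 1 ≤ k → k ≤ K → 0 < ω k)
    (hchain : ∀ k : ℕ, 2 ≤ k → k ≤ K → ω k / k < ω (k - 1) / ((k : ℝ) - 1))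
    (M Mstar : Fin p → Finset (Fin K)) :
    (∑ j : Fin p, (ω ((M j ∪ Mstar j).card) - ω ((M j).card)) ≤
      ∑ j ∈ Finset.univ.filter (fun j : Fin p => Mstar j ≠ ∅),
        ((Mstar j \ M j).card : ℝ) * ω ((Mstar j).card) / ((Mstar j).card : ℝ)) ∧
    (∑ k ∈ Finset.Icc 1 K,
        ω k * (((Finset.univ.filter fun j : Fin p => (M j ∪ Mstar j).card = k).card : ℝ) -
          ((Finset.univ.filter fun j : Fin p => (M j).card = k).card : ℝ)) ≤
      ∑ j ∈ Finset.univ.filter (fun j : Fin p => Mstar j ≠ ∅),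
        ((Mstar j \ M j).card : ℝ) * ω ((Mstar j).card) / ((Mstar j).card : ℝ)) := by
  have hanti := stmt12_ratio_anti K ω hchain
  have key : ∑ j : Fin p, (ω ((M j ∪ Mstar j).card) - ω ((M j).card)) ≤
      ∑ j ∈ Finset.univ.filter (fun j : Fin p => Mstar j ≠ ∅),
        ((Mstar j \ M j).card : ℝ) * ω ((Mstar j).card) / ((Mstar j).card : ℝ) := by
    rw [Finset.sum_filter]
    apply Finset.sum_le_sum
    intro j _
    by_cases hMs : Mstar j = ∅
    · simp [hMs]
    · rw [if_pos hMs]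
      set a := (M j).card
      set b := (M j ∪ Mstar j).card with hbdef
      set s := (Mstar j).card
      set d := (Mstar j \ M j).card with hddef
      have hs1 : 1 ≤ s := Finset.card_pos.mpr (Finset.nonempty_iff_ne_empty.mpr hMs)
      have hsb : s ≤ b := Finset.card_le_card Finset.subset_union_right
      have hab : a ≤ b := Finset.card_le_card Finset.subset_union_left
      have hbK : b ≤ K := le_trans (Finset.card_le_univ _) (by simp)
      have hbad : b = a + d := by
        have he : M j ∪ Mstar j = M j ∪ (Mstar j \ M j) :=
          (Finset.union_sdiff_self_eq_union).symm
        rw [hbdef, he, Finset.card_union_of_disjoint Finset.disjoint_sdiff]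
      have hb1 : 1 ≤ b := le_trans hs1 hsb
      have hbpos : (0:ℝ) < b := by exact_mod_cast hb1
      have hspos : (0:ℝ) < s := by exact_mod_cast hs1
      -- ω a ≥ a * (ω b / b)
      have hωa : (a : ℝ) * (ω b / b) ≤ ω a := by
        rcases Nat.eq_zero_or_pos a with h0 | h1
        · rw [h0]; simp [hω0]
        · have := hanti a b h1 hab hbK
          have ha : (0:ℝ) < a := by exact_mod_cast h1
          calc (a:ℝ) * (ω b / b) ≤ (a:ℝ) * (ω a / a) := by
                apply mul_le_mul_of_nonneg_left this (le_of_lt ha)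
            _ = ω a := by field_simp
      have hωb : ω b = (b : ℝ) * (ω b / b) := by field_simp
      have hrs : ω b / b ≤ ω s / s := hanti s b hs1 hsb hbK
      have hd : (d : ℝ) = (b : ℝ) - a := by
        rw [hbad]; push_cast; ring
      calc ω b - ω a ≤ (b : ℝ) * (ω b / b) - (a : ℝ) * (ω b / b) := by
            rw [← hωb]; linarith
        _ = (d : ℝ) * (ω b / b) := by rw [hd]; ring
        _ ≤ (d : ℝ) * (ω s / s) := by
            apply mul_le_mul_of_nonneg_left hrs (Nat.cast_nonneg _)
        _ = (d : ℝ) * ω s / s := by ring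
  refine ⟨key, ?_⟩
  have e1 := stmt12_fiber_sum K p ω hω0 (fun j => (M j ∪ Mstar j).card)
    (fun j => le_trans (Finset.card_le_univ _) (by simp))
  have e2 := stmt12_fiber_sum K p ω hω0 (fun j => (M j).card)
    (fun j => le_trans (Finset.card_le_univ _) (by simp))
  have : ∑ k ∈ Finset.Icc 1 K,
        ω k * (((Finset.univ.filter fun j : Fin p => (M j ∪ Mstar j).card = k).card : ℝ) -
          ((Finset.univ.filter fun j : Fin p => (M j).card = k).card : ℝ))
      = ∑ j : Fin p, (ω ((M j ∪ Mstar j).card) - ω ((M j).card)) := by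
    rw [Finset.sum_sub_distrib, ← e1, ← e2, ← Finset.sum_sub_distrib]
    apply Finset.sum_congr rfl
    intro k _
    ring
  rw [this]
  exact key
end
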